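/- arXiv:2506.19064 — 5 statements merged into one kernel-verified Lean document; each statement's English description precedes it below -/
import Mathlib

section
/- Let μ be a compactly supported probability measure on ℝ. There exist a unique open interval D_μ ⊆ ℝ with D̂_μ ⊆ D_μ and a unique real analytic function R_μ : D_μ → ℝ with R_μ(u) = R̂_μ(u) for all u ∈ D̂_μ∖{0}, such that: for every open interval D ⊆ ℝ containing D̂_μ and every real analytic f : D → ℝ with f(u) = R̂_μ(u) for all u ∈ D̂_μ∖{0}, one has D ⊆ D_μ and f agrees with R_μ on D. -/
open MeasureTheory Filter Set

noncomputable section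

/-- The topological support of a Borel measure on `ℝ`. -/
def msupp (μ : Measure ℝ) : Set ℝ := {x : ℝ | ∀ U ∈ nhds x, μ U ≠ 0}

/-- Compact support: some compact set has full measure. -/
def HasCompactSupp (μ : Measure ℝ) : Prop := ∃ K : Set ℝ, IsCompact K ∧ μ K = 1

/-- `a_μ`, the infimum of the support. -/
def aInf (μ : Measure ℝ) : ℝ := sInf (msupp μ)

/-- `b_μ`, the supremum of the support. -/
def bSup (μ : Measure ℝ) : ℝ := sSup (msupp μ)

/-- The (real) Stieltjes transform `G_μ(z) = ∫ (λ - z)⁻¹ dμ(λ)`. -/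
def Gst (μ : Measure ℝ) (z : ℝ) : ℝ := ∫ l, (l - z)⁻¹ ∂μ

/-- `G_μ(a_μ) = lim_{z ↑ a_μ} G_μ(z) ∈ (0,∞]`, as the supremum (in `EReal`) of the values of
`G_μ` on `(-∞, a_μ)` (the two agree since `G_μ` is increasing there). -/
def GaSup (μ : Measure ℝ) : EReal :=
  sSup ((fun z => ((Gst μ z : ℝ) : EReal)) '' Set.Iio (aInf μ))

/-- `G_μ(b_μ) = lim_{z ↓ b_μ} G_μ(z) ∈ [-∞,0)`, as the infimum (in `EReal`) of the values of
`G_μ` on `(b_μ, ∞)` (the two agree since `G_μ` is increasing there). -/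
def GbInf (μ : Measure ℝ) : EReal :=
  sInf ((fun z => ((Gst μ z : ℝ) : EReal)) '' Set.Ioi (bSup μ))

/-- The interval `D̂_μ = (-G_μ(a_μ), -G_μ(b_μ)) ⊆ ℝ`. -/
def Dhat (μ : Measure ℝ) : Set ℝ :=
  {u : ℝ | -(GaSup μ) < (u : EReal) ∧ (u : EReal) < -(GbInf μ)}

/-- The inverse `G_μ^⟨-1⟩` of the restriction of `G_μ` to `ℝ ∖ [a_μ, b_μ]`. -/
def Ginv (μ : Measure ℝ) (g : ℝ) : ℝ :=
  Function.invFunOn (Gst μ) (Set.Iio (aInf μ) ∪ Set.Ioi (bSup μ)) g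

/-- The real `R`-transform `R̂_μ(u) = G_μ^⟨-1⟩(-u) - u⁻¹`, meaningful for `u ∈ D̂_μ ∖ {0}`. -/
def Rhat (μ : Measure ℝ) (u : ℝ) : ℝ := Ginv μ (-u) - u⁻¹

/-- `ρ` is a free additive convolution of `μ` and `ν`. -/
def IsFreeAdd (μ ν ρ : Measure ℝ) : Prop :=
  IsProbabilityMeasure ρ ∧ HasCompactSupp ρ ∧
  ∃ ε > (0 : ℝ), ∀ u : ℝ, u ∈ Set.Ioo (-ε) ε → u ≠ 0 →
    u ∈ Dhat ρ ∧ u ∈ Dhat μ ∧ u ∈ Dhat ν ∧ Rhat ρ u = Rhat μ u + Rhat ν u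

/-- `μ` is nondegenerate: not a point mass. -/
def Nondeg (μ : Measure ℝ) : Prop := ¬ ∃ c : ℝ, μ = Measure.dirac c

/-- The logarithmic potential `U_ρ(z) = ∫ log |z - λ| dρ(λ)`. -/
def Upot (ρ : Measure ℝ) (z : ℝ) : ℝ := ∫ l, Real.log |z - l| ∂ρ

/-- `E_{μ,ν,z}(g) = ∫₀^g s R̂_μ'(-s) ds + ∫ log (λ - z + R̂_μ(-g)) dν(λ)`. -/
def Efun (μ ν : Measure ℝ) (z : ℝ) (g : ℝ) : ℝ :=
  (∫ s in (0:ℝ)..g, s * deriv (Rhat μ) (-s)) + ∫ l, Real.log (l - z + Rhat μ (-g)) ∂ν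

/-- The domain `Ê_{μ,ν,z}` of `E_{μ,ν,z}`. -/
def Ehat (μ ν : Measure ℝ) (z : ℝ) : Set ℝ :=
  {g : ℝ | -g ∈ Dhat μ ∧ g ≠ 0 ∧ z - Rhat μ (-g) < aInf ν}

/-- `F̂_{μ,ν}(h) = R̂_μ(-G_ν(h)) + h`. -/
def Fhat (μ ν : Measure ℝ) (h : ℝ) : ℝ := Rhat μ (-(Gst ν h)) + h

/-- The domain of `F̂_{μ,ν}`. -/
def FhatDom (μ ν : Measure ℝ) : Set ℝ := {h : ℝ | h < aInf ν ∧ -(Gst ν h) ∈ Dhat μ}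

/-- `Ĥ_{μ,ν}`: points of the domain to the left of which `F̂_{μ,ν}'` is positive. -/
def Hhat (μ ν : Measure ℝ) : Set ℝ :=
  {h : ℝ | h ∈ FhatDom μ ν ∧ ∀ t ∈ FhatDom μ ν, t < h → 0 < deriv (Fhat μ ν) t}

/-- `h*_{μ,ν} = sup Ĥ_{μ,ν}`. -/
def hstar (μ ν : Measure ℝ) : ℝ := sSup (Hhat μ ν)

end


/-! ### Auxiliary lemmas for statement9 -/

noncomputable section
namespace St9
set_option linter.unusedSectionVars false

open MeasureTheory Filter Set Metric Complex

variable {μ : Measure ℝ} [IsProbabilityMeasure μ]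

/-! #### Support basics -/

lemma isClosed_msupp : IsClosed (msupp μ) := by
  rw [← isOpen_compl_iff, isOpen_iff_mem_nhds]
  intro x hx
  simp only [msupp, mem_compl_iff, mem_setOf_eq, not_forall] at hx
  obtain ⟨U, hU, hU0⟩ := hx
  simp only [not_ne_iff] at hU0
  obtain ⟨V, hVU, hVo, hxV⟩ := _root_.mem_nhds_iff.1 hU
  have hV0 : μ V = 0 := le_antisymm ((measure_mono hVU).trans hU0.le) zero_le
  refine _root_.mem_nhds_iff.2 ⟨V, fun y hy => ?_, hVo, hxV⟩
  simp only [msupp, mem_compl_iff, mem_setOf_eq, not_forall]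
  exact ⟨V, hVo.mem_nhds hy, by simp [hV0]⟩

lemma measure_compl_msupp : μ (msupp μ)ᶜ = 0 := by
  classical
  set B := TopologicalSpace.countableBasis ℝ with hB
  have hBbasis := TopologicalSpace.isBasis_countableBasis ℝ
  have hsub : (msupp μ)ᶜ ⊆ ⋃ V ∈ {V ∈ B | μ V = 0}, V := by
    intro x hx
    simp only [msupp, mem_compl_iff, mem_setOf_eq, not_forall] at hx
    obtain ⟨U, hU, hU0⟩ := hx
    simp only [not_ne_iff] at hU0
    obtain ⟨V, hVB, hxV, hVU⟩ := hBbasis.mem_nhds_iff.1 hU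
    exact mem_biUnion ⟨hVB, le_antisymm ((measure_mono hVU).trans hU0.le) zero_le⟩ hxV
  refine le_antisymm ((measure_mono hsub).trans ?_) zero_le
  refine le_of_eq ((measure_biUnion_null_iff
    ((TopologicalSpace.countable_countableBasis ℝ).mono (fun V hV => hV.1))).2
    (fun V hV => hV.2))

lemma msupp_nonempty : (msupp μ).Nonempty := by
  by_contra h
  rw [not_nonempty_iff_eq_empty] at h
  have := measure_compl_msupp (μ := μ)
  rw [h, compl_empty] at this
  simp [measure_univ] at this

lemma msupp_subset_K {K : Set ℝ} (hK : IsCompact K) (hK1 : μ K = 1) : msupp μ ⊆ K := by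
  intro x hx
  by_contra hxK
  have hU : Kᶜ ∈ nhds x := (hK.isClosed.isOpen_compl).mem_nhds hxK
  refine hx Kᶜ hU ?_
  have : μ Kᶜ = 1 - μ K := by
    rw [measure_compl hK.isClosed.measurableSet (by simp [hK1])]
    simp [measure_univ]
  rw [this, hK1]; simp

lemma bddBelow_msupp (hc : HasCompactSupp μ) : BddBelow (msupp μ) := by
  obtain ⟨K, hK, hK1⟩ := hc
  exact (hK.isBounded.subset (msupp_subset_K hK hK1)).bddBelow

lemma bddAbove_msupp (hc : HasCompactSupp μ) : BddAbove (msupp μ) := by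
  obtain ⟨K, hK, hK1⟩ := hc
  exact (hK.isBounded.subset (msupp_subset_K hK hK1)).bddAbove

lemma aInf_le_bSup (hc : HasCompactSupp μ) : aInf μ ≤ bSup μ := by
  obtain ⟨x, hx⟩ := msupp_nonempty (μ := μ)
  exact (csInf_le (bddBelow_msupp hc) hx).trans (le_csSup (bddAbove_msupp hc) hx)

lemma msupp_subset_Icc (hc : HasCompactSupp μ) : msupp μ ⊆ Icc (aInf μ) (bSup μ) :=
  fun _ hx => ⟨csInf_le (bddBelow_msupp hc) hx, le_csSup (bddAbove_msupp hc) hx⟩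

lemma ae_mem_Icc (hc : HasCompactSupp μ) : ∀ᵐ l ∂μ, l ∈ Icc (aInf μ) (bSup μ) := by
  have : μ (Icc (aInf μ) (bSup μ))ᶜ = 0 :=
    le_antisymm ((measure_mono (compl_subset_compl.2 (msupp_subset_Icc hc))).trans
      measure_compl_msupp.le) zero_le
  rw [ae_iff]
  refine le_antisymm (le_trans (measure_mono ?_) this.le) zero_le
  intro x hx
  simpa using hx

end St9
end

noncomputable section
namespace St9
set_option linter.unusedSectionVars false
open MeasureTheory Filter Set Metric Complex

variable {μ : Measure ℝ} [IsProbabilityMeasure μ]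

/-- The union `(-∞, a) ∪ (b, ∞)`. -/
def Sreal (μ : Measure ℝ) : Set ℝ := Iio (aInf μ) ∪ Ioi (bSup μ)

/-- `[a,b]` as a subset of `ℂ`. -/
def IccC (μ : Measure ℝ) : Set ℂ := (fun x : ℝ => (x : ℂ)) '' Icc (aInf μ) (bSup μ)

/-- Complement of `[a,b]` in `ℂ`. -/
def Om (μ : Measure ℝ) : Set ℂ := (IccC μ)ᶜ

/-- Complex Stieltjes transform. -/
def GC (μ : Measure ℝ) (z : ℂ) : ℂ := ∫ l, ((l : ℂ) - z)⁻¹ ∂μ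

lemma isOpen_Om : IsOpen (Om μ) :=
  ((isCompact_Icc.image continuous_ofReal).isClosed).isOpen_compl

lemma mem_Om_iff {x : ℝ} : (x : ℂ) ∈ Om μ ↔ x ∉ Icc (aInf μ) (bSup μ) := by
  simp only [Om, IccC, mem_compl_iff, mem_image, not_exists, not_and]
  constructor
  · intro h hx
    exact h x hx rfl
  · intro h l hl hlx
    exact h (by rwa [ofReal_inj.1 hlx] at hl)

lemma dist_lb (hc : HasCompactSupp μ) {z : ℂ} (hz : z ∈ Om μ) :
    ∃ d > 0, ∀ l ∈ Icc (aInf μ) (bSup μ), d ≤ ‖(l : ℂ) - z‖ := by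
  have hne : (IccC μ).Nonempty :=
    ⟨(aInf μ : ℂ), mem_image_of_mem _ (left_mem_Icc.2 (aInf_le_bSup hc))⟩
  refine ⟨infDist z (IccC μ), ?_, fun l hl => ?_⟩
  · exact ((isCompact_Icc.image continuous_ofReal).isClosed.notMem_iff_infDist_pos hne).1 hz
  · calc infDist z (IccC μ) ≤ dist z ((l : ℝ) : ℂ) :=
      infDist_le_dist_of_mem (mem_image_of_mem _ hl)
    _ = ‖(l : ℂ) - z‖ := by rw [dist_eq_norm, norm_sub_rev]

lemma GC_hasDerivAt_and_integrable (hc : HasCompactSupp μ) {z : ℂ} (hz : z ∈ Om μ) :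
    HasDerivAt (GC μ) (∫ l, (((l : ℂ) - z) ^ 2)⁻¹ ∂μ) z ∧
      Integrable (fun l : ℝ => (((l : ℂ) - z) ^ 2)⁻¹) μ := by
  obtain ⟨d, hd, hdl⟩ := dist_lb hc hz
  have hmeas : ∀ w : ℂ, AEStronglyMeasurable (fun l : ℝ => ((l : ℂ) - w)⁻¹) μ := fun w =>
    (((Complex.measurable_ofReal).sub measurable_const).inv).aestronglyMeasurable
  have hmeas2 : AEStronglyMeasurable (fun l : ℝ => (((l : ℂ) - z) ^ 2)⁻¹) μ :=
    ((((Complex.measurable_ofReal).sub measurable_const).pow_const 2).inv).aestronglyMeasurable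
  have hball : ∀ᵐ (l : ℝ) ∂μ, ∀ w ∈ ball z (d / 2), d / 2 ≤ ‖(l : ℂ) - w‖ := by
    filter_upwards [ae_mem_Icc hc] with l hl w hw
    have h1 : d ≤ ‖(l : ℂ) - z‖ := hdl l hl
    have h2 : ‖w - z‖ < d / 2 := by rwa [mem_ball, dist_eq_norm] at hw
    have h3 : ‖(l : ℂ) - z‖ ≤ ‖(l : ℂ) - w‖ + ‖w - z‖ := by
      calc ‖(l : ℂ) - z‖ = ‖((l : ℂ) - w) + (w - z)‖ := by ring_nf
      _ ≤ ‖(l : ℂ) - w‖ + ‖w - z‖ := norm_add_le _ _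
    linarith
  have key := hasDerivAt_integral_of_dominated_loc_of_deriv_le (μ := μ)
    (F := fun (w : ℂ) (l : ℝ) => ((l : ℂ) - w)⁻¹)
    (F' := fun (w : ℂ) (l : ℝ) => (((l : ℂ) - w) ^ 2)⁻¹)
    (x₀ := z) (bound := fun _ => ((d / 2) ^ 2)⁻¹) (s := ball z (d / 2)) (ball_mem_nhds z (half_pos hd))
    (.of_forall fun w => hmeas w)
    (((integrable_const (d⁻¹)).mono' (hmeas z)) ?_) hmeas2 ?_ (integrable_const _) ?_
  · exact ⟨key.2, key.1⟩
  · filter_upwards [ae_mem_Icc hc] with l hl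
    rw [norm_inv]
    exact inv_anti₀ hd (hdl l hl)
  · filter_upwards [hball] with l hl w hw
    rw [norm_inv, norm_pow]
    exact inv_anti₀ (by positivity) (pow_le_pow_left₀ (le_of_lt (half_pos hd)) (hl w hw) 2)
  · filter_upwards [hball] with l hl w hw
    have hne : (l : ℂ) - w ≠ 0 := by
      intro h
      have := hl w hw
      rw [h, norm_zero] at this
      linarith
    have h0 : HasDerivAt (fun w : ℂ => (l : ℂ) - w) (-1) w := by
      simpa using (hasDerivAt_id w).const_sub (l : ℂ)
    have := h0.inv hne
    convert this using 1
    · rfl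
    · ext x; simp [Pi.inv_apply, mul_comm]
    · ring

lemma GC_analyticAt (hc : HasCompactSupp μ) {z : ℂ} (hz : z ∈ Om μ) :
    AnalyticAt ℂ (GC μ) z := by
  refine (DifferentiableOn.analyticOnNhd (fun w hw => ?_) isOpen_Om) z hz
  exact ((GC_hasDerivAt_and_integrable hc hw).1.differentiableAt).differentiableWithinAt

lemma GC_real (x : ℝ) : GC μ (x : ℂ) = ((Gst μ x : ℝ) : ℂ) := by
  rw [GC, Gst, show (fun l : ℝ => ((l : ℂ) - x)⁻¹) = fun l : ℝ => ((((l - x)⁻¹ : ℝ)) : ℂ) by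
    funext l; push_cast; ring]
  exact integral_ofReal

lemma GC_conj (z : ℂ) : GC μ ((starRingEnd ℂ) z) = (starRingEnd ℂ) (GC μ z) := by
  rw [GC, GC, ← integral_conj]
  congr 1
  funext l
  rw [map_inv₀, map_sub, Complex.conj_ofReal]

lemma sq_integral_real (x : ℝ) :
    (∫ l, (((l : ℂ) - (x : ℂ)) ^ 2)⁻¹ ∂μ) = ((∫ l, ((l - x) ^ 2)⁻¹ ∂μ : ℝ) : ℂ) := by
  rw [show (fun l : ℝ => (((l : ℂ) - (x:ℂ)) ^ 2)⁻¹) = fun l : ℝ => ((((((l - x) ^ 2)⁻¹ : ℝ))) : ℂ) by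
    funext l; push_cast; ring]
  exact integral_ofReal

lemma Gst_hasDerivAt (hc : HasCompactSupp μ) {x : ℝ} (hx : x ∉ Icc (aInf μ) (bSup μ)) :
    HasDerivAt (Gst μ) (∫ l, ((l - x) ^ 2)⁻¹ ∂μ) x := by
  have h := (GC_hasDerivAt_and_integrable hc (mem_Om_iff.2 hx)).1.real_of_complex
  rw [sq_integral_real, ofReal_re] at h
  convert h using 2 with t
  rw [GC_real, ofReal_re]

lemma integrable_sq_real (hc : HasCompactSupp μ) {x : ℝ} (hx : x ∉ Icc (aInf μ) (bSup μ)) :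
    Integrable (fun l : ℝ => ((l - x) ^ 2)⁻¹) μ := by
  have h := (GC_hasDerivAt_and_integrable hc (mem_Om_iff.2 hx)).2.re
  refine h.congr (.of_forall fun l => ?_)
  have h2 : (((l : ℂ) - (x : ℂ)) ^ 2)⁻¹ = (((((l - x) ^ 2)⁻¹ : ℝ)) : ℂ) := by push_cast; ring
  show RCLike.re ((((l : ℂ) - (x : ℂ)) ^ 2)⁻¹) = _
  rw [h2]
  exact Complex.ofReal_re _

lemma deriv_integral_pos (hc : HasCompactSupp μ) {x : ℝ}
    (hx : x ∉ Icc (aInf μ) (bSup μ)) : 0 < ∫ l, ((l - x) ^ 2)⁻¹ ∂μ := by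
  set R := max |aInf μ - x| |bSup μ - x| with hR
  have hax : aInf μ - x ≠ 0 := by
    intro h
    exact hx ⟨by linarith [sub_eq_zero.1 h], by linarith [sub_eq_zero.1 h, aInf_le_bSup hc]⟩
  have hRpos : 0 < R := lt_max_of_lt_left (abs_pos.2 hax)
  have hbd : ∀ᵐ l ∂μ, (R ^ 2)⁻¹ ≤ ((l - x) ^ 2)⁻¹ := by
    filter_upwards [ae_mem_Icc hc] with l hl
    have hlx : l - x ≠ 0 := by
      intro h
      exact hx (by rwa [sub_eq_zero.1 h] at hl)
    have h1 : (l - x) ^ 2 ≤ R ^ 2 := by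
      apply sq_le_sq'
      · calc -R ≤ -|aInf μ - x| := neg_le_neg (le_max_left _ _)
        _ ≤ aInf μ - x := neg_abs_le _
        _ ≤ l - x := by linarith [hl.1]
      · calc l - x ≤ bSup μ - x := by linarith [hl.2]
        _ ≤ |bSup μ - x| := le_abs_self _
        _ ≤ R := le_max_right _ _
    exact inv_anti₀ (by positivity) h1
  calc (0 : ℝ) < (R ^ 2)⁻¹ := by positivity
  _ = ∫ _, (R ^ 2)⁻¹ ∂μ := by simp
  _ ≤ ∫ l, ((l - x) ^ 2)⁻¹ ∂μ :=
    integral_mono_ae (integrable_const _) (integrable_sq_real hc hx) hbd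

end St9
end

noncomputable section
namespace St9
set_option linter.unusedSectionVars false
open MeasureTheory Filter Set Metric Complex

variable {μ : Measure ℝ} [IsProbabilityMeasure μ]

lemma inv_le_inv_neg {u v : ℝ} (hv : v < 0) (h : u ≤ v) : v⁻¹ ≤ u⁻¹ := by
  have h1 : (-u)⁻¹ ≤ (-v)⁻¹ := inv_anti₀ (by linarith) (by linarith)
  rw [inv_neg, inv_neg] at h1
  linarith

lemma abs_lb (hc : HasCompactSupp μ) {x : ℝ} (hx : x ∉ Icc (aInf μ) (bSup μ)) :
    0 < min |aInf μ - x| |bSup μ - x| ∧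
    ∀ l ∈ Icc (aInf μ) (bSup μ), min |aInf μ - x| |bSup μ - x| ≤ |l - x| := by
  rw [mem_Icc, not_and_or, not_le, not_le] at hx
  constructor
  · rcases hx with h | h
    · exact lt_min (abs_pos.2 (by intro h'; nlinarith [sub_eq_zero.1 h', aInf_le_bSup hc]))
        (abs_pos.2 (by intro h'; nlinarith [sub_eq_zero.1 h', aInf_le_bSup hc]))
    · exact lt_min (abs_pos.2 (by intro h'; nlinarith [sub_eq_zero.1 h', aInf_le_bSup hc]))
        (abs_pos.2 (by intro h'; nlinarith [sub_eq_zero.1 h']))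
  · intro l hl
    rcases hx with h | h
    · calc min |aInf μ - x| |bSup μ - x| ≤ |aInf μ - x| := min_le_left _ _
      _ = aInf μ - x := abs_of_pos (by linarith)
      _ ≤ l - x := by linarith [hl.1]
      _ ≤ |l - x| := le_abs_self _
    · calc min |aInf μ - x| |bSup μ - x| ≤ |bSup μ - x| := min_le_right _ _
      _ = x - bSup μ := by rw [abs_sub_comm]; exact abs_of_pos (by linarith)
      _ ≤ x - l := by linarith [hl.2]
      _ ≤ |l - x| := by rw [abs_sub_comm]; exact le_abs_self _

lemma integrable_inv_real (hc : HasCompactSupp μ) {x : ℝ} (hx : x ∉ Icc (aInf μ) (bSup μ)) :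
    Integrable (fun l : ℝ => (l - x)⁻¹) μ := by
  obtain ⟨hm, hlb⟩ := abs_lb hc hx
  refine (integrable_const ((min |aInf μ - x| |bSup μ - x|)⁻¹)).mono'
    (((measurable_id.sub_const x).inv).aestronglyMeasurable) ?_
  filter_upwards [ae_mem_Icc hc] with l hl
  rw [Real.norm_eq_abs, abs_inv]
  exact inv_anti₀ hm (hlb l hl)

lemma Gst_bounds (hc : HasCompactSupp μ) {x : ℝ} (hx : x ∉ Icc (aInf μ) (bSup μ)) :
    (bSup μ - x)⁻¹ ≤ Gst μ x ∧ Gst μ x ≤ (aInf μ - x)⁻¹ := by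
  have hint := integrable_inv_real hc hx
  have hx' := hx
  rw [mem_Icc, not_and_or, not_le, not_le] at hx'
  constructor
  · refine (by simp : (bSup μ - x)⁻¹ = ∫ _, (bSup μ - x)⁻¹ ∂μ) ▸
      integral_mono_ae (integrable_const _) hint ?_
    filter_upwards [ae_mem_Icc hc] with l hl
    rcases hx' with h | h
    · exact inv_anti₀ (by linarith [hl.1]) (by linarith [hl.2])
    · exact inv_le_inv_neg (by linarith [hl.2]) (by linarith [hl.2])
  · have h2 : ∫ _, (aInf μ - x)⁻¹ ∂μ = (aInf μ - x)⁻¹ := by simp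
    refine h2 ▸ integral_mono_ae hint (integrable_const _) ?_
    filter_upwards [ae_mem_Icc hc] with l hl
    rcases hx' with h | h
    · exact inv_anti₀ (by linarith) (by linarith [hl.1])
    · exact inv_le_inv_neg (by linarith [hl.2]) (by linarith [hl.1])

lemma not_mem_Icc_of_lt {x : ℝ} (hx : x < aInf μ) : x ∉ Icc (aInf μ) (bSup μ) := by
  rw [mem_Icc]; push_neg; intro h; linarith

lemma not_mem_Icc_of_gt (hc : HasCompactSupp μ) {x : ℝ} (hx : bSup μ < x) :
    x ∉ Icc (aInf μ) (bSup μ) := by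
  rw [mem_Icc]; push_neg; intro h; linarith [aInf_le_bSup hc]

lemma Gst_pos (hc : HasCompactSupp μ) {x : ℝ} (hx : x < aInf μ) : 0 < Gst μ x := by
  have h := (Gst_bounds hc (not_mem_Icc_of_lt hx)).1
  have : 0 < (bSup μ - x)⁻¹ := inv_pos.2 (by linarith [aInf_le_bSup hc])
  linarith

lemma Gst_neg (hc : HasCompactSupp μ) {x : ℝ} (hx : bSup μ < x) : Gst μ x < 0 := by
  have h := (Gst_bounds hc (not_mem_Icc_of_gt hc hx)).2
  have : (aInf μ - x)⁻¹ < 0 := inv_lt_zero.2 (by linarith [aInf_le_bSup hc])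
  linarith

lemma Gst_strictMonoOn_Iio (hc : HasCompactSupp μ) : StrictMonoOn (Gst μ) (Iio (aInf μ)) := by
  refine strictMonoOn_of_deriv_pos (convex_Iio _) (fun x hx =>
    ((Gst_hasDerivAt hc (not_mem_Icc_of_lt hx)).continuousAt).continuousWithinAt) (fun x hx => ?_)
  rw [interior_Iio] at hx
  rw [(Gst_hasDerivAt hc (not_mem_Icc_of_lt hx)).deriv]
  exact deriv_integral_pos hc (not_mem_Icc_of_lt hx)

lemma Gst_strictMonoOn_Ioi (hc : HasCompactSupp μ) : StrictMonoOn (Gst μ) (Ioi (bSup μ)) := by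
  refine strictMonoOn_of_deriv_pos (convex_Ioi _) (fun x hx =>
    ((Gst_hasDerivAt hc (not_mem_Icc_of_gt hc hx)).continuousAt).continuousWithinAt)
    (fun x hx => ?_)
  rw [interior_Ioi] at hx
  rw [(Gst_hasDerivAt hc (not_mem_Icc_of_gt hc hx)).deriv]
  exact deriv_integral_pos hc (not_mem_Icc_of_gt hc hx)

lemma injOn_Gst (hc : HasCompactSupp μ) : InjOn (Gst μ) (Sreal μ) := by
  rintro x (hx | hx) y (hy | hy) hxy
  · exact (Gst_strictMonoOn_Iio hc).injOn hx hy hxy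
  · exact absurd (hxy ▸ Gst_pos hc hx) (not_lt.2 (Gst_neg hc hy).le)
  · exact absurd (hxy ▸ Gst_neg hc hx) (not_lt.2 (Gst_pos hc hy).le)
  · exact (Gst_strictMonoOn_Ioi hc).injOn hx hy hxy

lemma Ginv_eq (hc : HasCompactSupp μ) {z w : ℝ} (hz : z ∈ Sreal μ) (hw : Gst μ z = w) :
    Ginv μ w = z := by
  have hmem : Ginv μ w ∈ Iio (aInf μ) ∪ Ioi (bSup μ) :=
    Function.invFunOn_mem (f := Gst μ) ⟨z, hz, hw⟩
  have heq : Gst μ (Ginv μ w) = w := Function.invFunOn_eq (f := Gst μ) ⟨z, hz, hw⟩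
  exact injOn_Gst hc hmem hz (heq.trans hw.symm)

/-! #### `Dhat` basics -/

lemma GaSup_pos (hc : HasCompactSupp μ) : (0 : EReal) < GaSup μ := by
  have h1 : (0:EReal) < ((Gst μ (aInf μ - 1) : ℝ) : EReal) :=
    EReal.coe_pos.2 (Gst_pos hc (by linarith))
  exact lt_of_lt_of_le h1 (le_sSup ⟨aInf μ - 1, mem_Iio.2 (by linarith), rfl⟩)

lemma GbInf_neg (hc : HasCompactSupp μ) : GbInf μ < (0 : EReal) := by
  have h1 : ((Gst μ (bSup μ + 1) : ℝ) : EReal) < 0 :=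
    EReal.coe_neg'.2 (Gst_neg hc (by linarith))
  exact lt_of_le_of_lt (sInf_le ⟨bSup μ + 1, mem_Ioi.2 (by linarith), rfl⟩) h1

lemma zero_mem_Dhat (hc : HasCompactSupp μ) : (0 : ℝ) ∈ Dhat μ := by
  constructor
  · rw [show ((0:ℝ) : EReal) = -(0 : EReal) by simp]
    exact EReal.neg_lt_neg_iff.2 (GaSup_pos hc)
  · rw [show ((0:ℝ) : EReal) = -(0 : EReal) by simp]
    exact EReal.neg_lt_neg_iff.2 (GbInf_neg hc)

lemma isOpen_Dhat : IsOpen (Dhat μ) := by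
  have : Dhat μ = (fun u : ℝ => (u : EReal)) ⁻¹' (Ioo (-(GaSup μ)) (-(GbInf μ))) := rfl
  rw [this]
  exact isOpen_Ioo.preimage continuous_coe_real_ereal

lemma ordConnected_Dhat : (Dhat μ).OrdConnected := by
  constructor
  intro x hx y hy z hz
  exact ⟨lt_of_lt_of_le hx.1 (EReal.coe_le_coe_iff.2 hz.1),
    lt_of_le_of_lt (EReal.coe_le_coe_iff.2 hz.2) hy.2⟩

lemma exists_preimage (hc : HasCompactSupp μ) {u : ℝ} (hu : u ∈ Dhat μ) (h0 : u ≠ 0) :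
    ∃ z ∈ Sreal μ, Gst μ z = -u := by
  rcases lt_or_gt_of_ne h0 with hneg | hpos
  · -- u < 0 : use the branch on `Iio a`, where Gst > 0 and -u > 0
    have h1 : ((-u : ℝ) : EReal) < GaSup μ := EReal.neg_lt_comm.1 (by exact_mod_cast hu.1)
    obtain ⟨v, ⟨z, hz, rfl⟩, hv⟩ := lt_sSup_iff.1 h1
    rw [EReal.coe_lt_coe_iff] at hv
    set z₁ := min z (aInf μ - (-u)⁻¹ - 1) with hz₁
    have hz₁a : z₁ < aInf μ := lt_of_le_of_lt (min_le_right _ _)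
      (by have : 0 < (-u)⁻¹ := inv_pos.2 (by linarith); linarith)
    have hGz₁ : Gst μ z₁ < -u := by
      have hb := (Gst_bounds hc (not_mem_Icc_of_lt hz₁a)).2
      have h2 : aInf μ - z₁ ≥ (-u)⁻¹ + 1 := by
        have := min_le_right z (aInf μ - (-u)⁻¹ - 1); simp only [hz₁]; linarith
      have h3 : (aInf μ - z₁)⁻¹ < -u := by
        rw [show -u = ((-u)⁻¹)⁻¹ by rw [inv_inv]]
        exact inv_strictAnti₀ (inv_pos.2 (by linarith)) (by linarith)
      linarith
    have hcont : ContinuousOn (Gst μ) (Icc z₁ z) := fun x hx =>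
      ((Gst_hasDerivAt hc (not_mem_Icc_of_lt (lt_of_le_of_lt hx.2 hz))).continuousAt).continuousWithinAt
    have hsub := intermediate_value_Icc (min_le_left z (aInf μ - (-u)⁻¹ - 1)) hcont
    obtain ⟨z', hz', hGz'⟩ := hsub ⟨hGz₁.le, hv.le⟩
    exact ⟨z', Or.inl (mem_Iio.2 (lt_of_le_of_lt hz'.2 hz)), hGz'⟩
  · -- u > 0 : use the branch on `Ioi b`
    have h1 : GbInf μ < ((-u : ℝ) : EReal) := EReal.lt_neg_comm.1 (by exact_mod_cast hu.2)
    obtain ⟨v, ⟨z, hz, rfl⟩, hv⟩ := sInf_lt_iff.1 h1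
    rw [EReal.coe_lt_coe_iff] at hv
    set z₂ := max z (bSup μ + u⁻¹ + 1) with hz₂
    have hz₂b : bSup μ < z₂ := lt_of_lt_of_le
      (by have : 0 < u⁻¹ := inv_pos.2 hpos; linarith) (le_max_right _ _)
    have hGz₂ : -u < Gst μ z₂ := by
      have hb := (Gst_bounds hc (not_mem_Icc_of_gt hc hz₂b)).1
      have h2 : z₂ - bSup μ ≥ u⁻¹ + 1 := by
        have := le_max_right z (bSup μ + u⁻¹ + 1); simp only [hz₂]; linarith
      have h3 : (z₂ - bSup μ)⁻¹ < u := by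
        rw [show u = (u⁻¹)⁻¹ by rw [inv_inv]]
        exact inv_strictAnti₀ (inv_pos.2 hpos) (by linarith)
      have h4 : (bSup μ - z₂)⁻¹ = -((z₂ - bSup μ)⁻¹) := by
        rw [show bSup μ - z₂ = -(z₂ - bSup μ) by ring, inv_neg]
      linarith
    have hcont : ContinuousOn (Gst μ) (Icc z z₂) := fun x hx =>
      ((Gst_hasDerivAt hc (not_mem_Icc_of_gt hc (lt_of_lt_of_le hz hx.1))).continuousAt).continuousWithinAt
    have hsub := intermediate_value_Icc (le_max_left z (bSup μ + u⁻¹ + 1)) hcont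
    obtain ⟨z', hz', hGz'⟩ := hsub ⟨hv.le, hGz₂.le⟩
    exact ⟨z', Or.inr (mem_Ioi.2 (lt_of_lt_of_le hz hz'.1)), hGz'⟩

end St9
end

noncomputable section
namespace St9
set_option linter.unusedSectionVars false
open MeasureTheory Filter Set Metric Complex

lemma continuousAt_deriv {F : ℂ → ℂ} {z₀ : ℂ} (hF : AnalyticAt ℂ F z₀) :
    ContinuousAt (deriv F) z₀ := by
  have h2 : ContinuousAt (fun z => fderiv ℂ F z 1) z₀ :=
    ((ContinuousLinearMap.apply ℂ ℂ (1 : ℂ)).continuous.continuousAt).comp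
      hF.fderiv.continuousAt
  simpa only [fderiv_apply_one_eq_deriv] using h2

lemma complex_local_inverse {F : ℂ → ℂ} {z₀ : ℂ} (hF : AnalyticAt ℂ F z₀)
    (h' : deriv F z₀ ≠ 0) :
    ∃ (g : ℂ → ℂ) (s : Set ℂ), IsOpen s ∧ z₀ ∈ s ∧ Set.InjOn F s ∧
      AnalyticAt ℂ g (F z₀) ∧ ContinuousAt g (F z₀) ∧ g (F z₀) = z₀ ∧
      (∀ᶠ w in nhds (F z₀), F (g w) = w) ∧ (∀ᶠ w in nhds (F z₀), g w ∈ s) := by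
  have hsd : HasStrictDerivAt F (deriv F z₀) z₀ :=
    hF.contDiffAt.hasStrictDerivAt (n := 1) one_ne_zero
  have hfd := hsd.hasStrictFDerivAt_equiv h'
  set e := hfd.toOpenPartialHomeomorph F with he
  have hcoe : ⇑e = F := rfl
  have hz₀ : z₀ ∈ e.source := hfd.mem_toOpenPartialHomeomorph_source
  have hFz₀ : F z₀ ∈ e.target := hfd.image_mem_toOpenPartialHomeomorph_target
  -- the set where F is analytic with nonvanishing derivative
  have hA : {z | AnalyticAt ℂ F z ∧ deriv F z ≠ 0} ∈ nhds z₀ :=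
    hF.eventually_analyticAt.and ((continuousAt_deriv hF).eventually_ne h')
  set s : Set ℂ := e.source ∩ interior {z | AnalyticAt ℂ F z ∧ deriv F z ≠ 0} with hs
  have hso : IsOpen s := e.open_source.inter isOpen_interior
  have hz₀s : z₀ ∈ s := ⟨hz₀, mem_interior_iff_mem_nhds.2 hA⟩
  have hinj : Set.InjOn F s := by
    rw [← hcoe]
    exact e.injOn.mono inter_subset_left
  -- the target-side open set on which the inverse is differentiable
  set t : Set ℂ := e.target ∩ e.symm ⁻¹' interior {z | AnalyticAt ℂ F z ∧ deriv F z ≠ 0} with ht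
  have hto : IsOpen t := by
    have := e.symm.isOpen_inter_preimage
      (s := interior {z | AnalyticAt ℂ F z ∧ deriv F z ≠ 0}) isOpen_interior
    rwa [OpenPartialHomeomorph.symm_source] at this
  have hFz₀t : F z₀ ∈ t := by
    refine ⟨hFz₀, ?_⟩
    have : e.symm (F z₀) = z₀ := by
      rw [← hcoe]; exact e.left_inv hz₀
    rw [mem_preimage, this]
    exact mem_interior_iff_mem_nhds.2 hA
  have hdiff : DifferentiableOn ℂ (⇑e.symm) t := by
    intro w hw
    obtain ⟨hw1, hw2⟩ := hw
    obtain ⟨hA1, hA2⟩ := interior_subset (mem_preimage.1 hw2)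
    have hder : HasDerivAt (⇑e) (deriv F (e.symm w)) (e.symm w) := by
      rw [hcoe]; exact hA1.differentiableAt.hasDerivAt
    exact ((e.hasDerivAt_symm hw1 hA2 hder).differentiableAt).differentiableWithinAt
  have hg_an : AnalyticAt ℂ (⇑e.symm) (F z₀) :=
    (hdiff.analyticOnNhd hto) _ hFz₀t
  refine ⟨⇑e.symm, s, hso, hz₀s, hinj, hg_an, e.continuousAt_symm hFz₀, ?_, ?_, ?_⟩
  · rw [← hcoe]; exact e.left_inv hz₀
  · have := e.eventually_right_inverse' hz₀
    rwa [hcoe] at this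
  · have hcont : ContinuousAt (⇑e.symm) (F z₀) := e.continuousAt_symm hFz₀
    have hgz : e.symm (F z₀) = z₀ := by rw [← hcoe]; exact e.left_inv hz₀
    exact hcont.eventually_mem (by rw [hgz]; exact hso.mem_nhds hz₀s)

lemma real_local_inverse {F : ℂ → ℂ} {x₀ c : ℝ} (hF : AnalyticAt ℂ F (x₀ : ℂ))
    (h' : deriv F (x₀ : ℂ) ≠ 0) (hc : F (x₀ : ℂ) = (c : ℂ))
    (hconj : ∀ z, F ((starRingEnd ℂ) z) = (starRingEnd ℂ) (F z)) :
    ∃ g : ℝ → ℝ, AnalyticAt ℝ g c ∧ g c = x₀ ∧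
      ∀ᶠ w in nhds c, F (((g w : ℝ) : ℂ)) = ((w : ℝ) : ℂ) := by
  obtain ⟨gC, s, hso, hz₀s, hinj, hga, hgc, hgz, hright, hgs⟩ := complex_local_inverse hF h'
  rw [hc] at hga hgc hgz hright hgs
  have hofReal : Filter.Tendsto (fun w : ℝ => (w : ℂ)) (nhds c) (nhds (c : ℂ)) :=
    Complex.continuous_ofReal.continuousAt
  have h1 : ∀ᶠ w : ℝ in nhds c, gC (w : ℂ) ∈ s := hofReal.eventually hgs
  have h2 : ∀ᶠ w : ℝ in nhds c, F (gC (w : ℂ)) = (w : ℂ) := hofReal.eventually hright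
  have hcont : ContinuousAt (fun w : ℝ => gC (w : ℂ)) c :=
    hgc.comp Complex.continuous_ofReal.continuousAt
  have hconj_cont : ContinuousAt (fun w : ℝ => (starRingEnd ℂ) (gC (w : ℂ))) c :=
    Complex.continuous_conj.continuousAt.comp hcont
  have h3 : ∀ᶠ w : ℝ in nhds c, (starRingEnd ℂ) (gC (w : ℂ)) ∈ s := by
    refine hconj_cont.eventually_mem ?_
    have : (starRingEnd ℂ) (gC (c : ℂ)) = (x₀ : ℂ) := by rw [hgz, Complex.conj_ofReal]
    rw [this]
    exact hso.mem_nhds hz₀s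
  have hreal : ∀ᶠ w : ℝ in nhds c, ((gC (w : ℂ)).re : ℂ) = gC (w : ℂ) := by
    filter_upwards [h1, h2, h3] with w hw1 hw2 hw3
    have hFc : F ((starRingEnd ℂ) (gC (w : ℂ))) = (w : ℂ) := by
      rw [hconj, hw2, Complex.conj_ofReal]
    have heq : (starRingEnd ℂ) (gC (w : ℂ)) = gC (w : ℂ) :=
      hinj hw3 hw1 (hFc.trans hw2.symm)
    exact Complex.conj_eq_iff_re.1 heq
  refine ⟨fun w => (gC (w : ℂ)).re, ?_, by
    show (gC ((c : ℝ) : ℂ)).re = x₀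
    rw [hgz]; exact Complex.ofReal_re _, ?_⟩
  · have h4 : AnalyticAt ℝ gC ((c : ℝ) : ℂ) := hga.restrictScalars
    have h5 : AnalyticAt ℝ (fun w : ℝ => (w : ℂ)) c := Complex.ofRealCLM.analyticAt c
    have h6 : AnalyticAt ℝ (fun w : ℝ => gC (w : ℂ)) c := h4.comp h5
    have h7 : AnalyticAt ℝ (⇑Complex.reCLM) (gC ((c : ℝ) : ℂ)) := Complex.reCLM.analyticAt _
    have h8 : AnalyticAt ℝ ((⇑Complex.reCLM) ∘ fun w : ℝ => gC (w : ℂ)) c :=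
      AnalyticAt.comp (g := ⇑Complex.reCLM) (f := fun w : ℝ => gC (w : ℂ)) (x := c) h7 h6
    exact h8.congr (Filter.Eventually.of_forall fun w => by
      simp [Function.comp, Complex.reCLM_apply])
  · filter_upwards [hreal, h2] with w hw1 hw2
    rw [hw1, hw2]

end St9
end

noncomputable section
namespace St9
set_option linter.unusedSectionVars false
open MeasureTheory Filter Set Metric Complex

variable {μ : Measure ℝ} [IsProbabilityMeasure μ]

lemma isOpen_Sreal : IsOpen (Sreal μ) := isOpen_Iio.union isOpen_Ioi

lemma mem_Sreal_not_Icc (hc : HasCompactSupp μ) {z : ℝ} (hz : z ∈ Sreal μ) :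
    z ∉ Icc (aInf μ) (bSup μ) := by
  rcases hz with hz | hz
  · exact not_mem_Icc_of_lt hz
  · exact not_mem_Icc_of_gt hc hz

lemma analyticAt_Ginv (hc : HasCompactSupp μ) {v : ℝ} (hv : ∃ z ∈ Sreal μ, Gst μ z = v) :
    AnalyticAt ℝ (Ginv μ) v := by
  obtain ⟨z₀, hz₀S, hGz₀⟩ := hv
  have hz₀icc : z₀ ∉ Icc (aInf μ) (bSup μ) := mem_Sreal_not_Icc hc hz₀S
  have hOm : (z₀ : ℂ) ∈ Om μ := mem_Om_iff.2 hz₀icc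
  have hAnF : AnalyticAt ℂ (GC μ) (z₀ : ℂ) := GC_analyticAt hc hOm
  have hDer := (GC_hasDerivAt_and_integrable hc hOm).1
  have hderiv : deriv (GC μ) (z₀ : ℂ) ≠ 0 := by
    rw [hDer.deriv, sq_integral_real]
    exact_mod_cast Complex.ofReal_ne_zero.2 (ne_of_gt (deriv_integral_pos hc hz₀icc))
  have hval : GC μ (z₀ : ℂ) = ((v : ℝ) : ℂ) := by rw [GC_real, hGz₀]
  obtain ⟨g, hg_an, hg_val, hg_ev⟩ := real_local_inverse hAnF hderiv hval (GC_conj)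
  have hmem : ∀ᶠ w in nhds v, g w ∈ Sreal μ :=
    hg_an.continuousAt.eventually_mem (by rw [hg_val]; exact isOpen_Sreal.mem_nhds hz₀S)
  have hGinv : ∀ᶠ w in nhds v, g w = Ginv μ w := by
    filter_upwards [hg_ev, hmem] with w h1 h2
    have hG : Gst μ (g w) = w := by
      have h3 : ((Gst μ (g w) : ℝ) : ℂ) = ((w : ℝ) : ℂ) := by rw [← GC_real, h1]
      exact_mod_cast h3
    exact (Ginv_eq hc h2 hG).symm
  exact hg_an.congr hGinv

lemma analyticAt_Rhat (hc : HasCompactSupp μ) {u : ℝ} (hu : u ∈ Dhat μ) (h0 : u ≠ 0) :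
    AnalyticAt ℝ (Rhat μ) u := by
  have hGinv_an : AnalyticAt ℝ (Ginv μ) (-u) := analyticAt_Ginv hc (exists_preimage hc hu h0)
  have hneg : AnalyticAt ℝ (fun v : ℝ => -v) u := (analyticAt_id).neg
  have h1 : AnalyticAt ℝ ((Ginv μ) ∘ fun v : ℝ => -v) u :=
    AnalyticAt.comp (f := fun v : ℝ => -v) (x := u) hGinv_an hneg
  have h2 : AnalyticAt ℝ (fun v : ℝ => v⁻¹) u := (analyticAt_id).inv h0
  exact (h1.sub h2 : AnalyticAt ℝ (fun v : ℝ => Ginv μ (-v) - v⁻¹) u)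

end St9
end

noncomputable section
namespace St9
set_option linter.unusedSectionVars false
open MeasureTheory Filter Set Metric Complex

variable {μ : Measure ℝ} [IsProbabilityMeasure μ]

/-- Auxiliary integral `N(w) = ∫ (1 - w λ)⁻¹ dμ(λ)`. -/
def NC (μ : Measure ℝ) (w : ℂ) : ℂ := ∫ l, (1 - w * (l : ℂ))⁻¹ ∂μ

/-- `X(w) = w N(w)`; satisfies `G(1/w) = -X(w)` near `0`. -/
def XC (μ : Measure ℝ) (w : ℂ) : ℂ := w * NC μ w

/-- Real version of `X`. -/
def xr (μ : Measure ℝ) (t : ℝ) : ℝ := t * ∫ l, (1 - t * l)⁻¹ ∂μ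

/-- The bound for the support. -/
def Mb (μ : Measure ℝ) : ℝ := max |aInf μ| |bSup μ|

lemma Mb_nonneg : 0 ≤ Mb μ := le_max_of_le_left (abs_nonneg _)

lemma ae_abs_le (hc : HasCompactSupp μ) : ∀ᵐ (l : ℝ) ∂μ, |l| ≤ Mb μ := by
  filter_upwards [ae_mem_Icc hc] with l hl
  rw [abs_le]
  constructor
  · calc -Mb μ ≤ -|aInf μ| := neg_le_neg (le_max_left _ _)
    _ ≤ aInf μ := neg_abs_le _
    _ ≤ l := hl.1
  · calc l ≤ bSup μ := hl.2
    _ ≤ |bSup μ| := le_abs_self _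
    _ ≤ Mb μ := le_max_right _ _

lemma one_sub_bound {w : ℂ} {l : ℝ} (hw : ‖w‖ < (Mb μ + 1)⁻¹) (hl : |l| ≤ Mb μ) :
    (Mb μ + 1)⁻¹ * (1 / (Mb μ + 1)) ≤ ‖1 - w * (l : ℂ)‖ ∨ True := Or.inr trivial

lemma norm_one_sub_ge {M : ℝ} (hM : 0 ≤ M) {w : ℂ} {l : ℝ} (hw : ‖w‖ < (M + 1)⁻¹)
    (hl : |l| ≤ M) : (M + 1)⁻¹ ≤ ‖1 - w * (l : ℂ)‖ := by
  have h1 : ‖w * (l : ℂ)‖ ≤ (M + 1)⁻¹ * M := by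
    rw [norm_mul, Complex.norm_real, Real.norm_eq_abs]
    exact mul_le_mul hw.le hl (abs_nonneg _) (by positivity)
  have h2 : ‖(1 : ℂ)‖ - ‖w * (l : ℂ)‖ ≤ ‖1 - w * (l : ℂ)‖ := norm_sub_norm_le _ _
  rw [norm_one] at h2
  have h3 : (M + 1)⁻¹ * M = 1 - (M + 1)⁻¹ := by field_simp; ring
  linarith [h1, h2, h3.le]

lemma NC_hasDerivAt_and_integrable (hc : HasCompactSupp μ) {w₀ : ℂ}
    (hw₀ : ‖w₀‖ < (2 * (Mb μ + 1))⁻¹) :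
    HasDerivAt (NC μ) (∫ l, (l : ℂ) * ((1 - w₀ * (l : ℂ)) ^ 2)⁻¹ ∂μ) w₀ ∧
      Integrable (fun l : ℝ => (l : ℂ) * ((1 - w₀ * (l : ℂ)) ^ 2)⁻¹) μ := by
  set M := Mb μ with hM
  have hM0 : 0 ≤ M := Mb_nonneg
  set r₀ := (2 * (M + 1))⁻¹ with hr₀
  have hr₀pos : 0 < r₀ := by positivity
  have hball_norm : ∀ x ∈ ball w₀ r₀, ‖x‖ < (M + 1)⁻¹ := by
    intro x hx
    rw [mem_ball, dist_eq_norm] at hx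
    have : ‖x‖ ≤ ‖x - w₀‖ + ‖w₀‖ := by
      calc ‖x‖ = ‖(x - w₀) + w₀‖ := by ring_nf
      _ ≤ ‖x - w₀‖ + ‖w₀‖ := norm_add_le _ _
    have h2 : r₀ + r₀ = (M + 1)⁻¹ := by
      rw [hr₀, ← two_mul, mul_inv, ← mul_assoc,
        mul_inv_cancel₀ (by norm_num : (2:ℝ) ≠ 0), one_mul]
    linarith
  have hmeas : ∀ w : ℂ, AEStronglyMeasurable (fun l : ℝ => (1 - w * (l : ℂ))⁻¹) μ := fun w =>
    (((measurable_const.sub (measurable_const.mul Complex.measurable_ofReal))).inv).aestronglyMeasurable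
  have hmeas2 : AEStronglyMeasurable (fun l : ℝ => (l : ℂ) * ((1 - w₀ * (l : ℂ)) ^ 2)⁻¹) μ :=
    (Complex.measurable_ofReal.mul
      (((measurable_const.sub (measurable_const.mul Complex.measurable_ofReal)).pow_const 2).inv)).aestronglyMeasurable
  have key := hasDerivAt_integral_of_dominated_loc_of_deriv_le (μ := μ)
    (F := fun (w : ℂ) (l : ℝ) => (1 - w * (l : ℂ))⁻¹)
    (F' := fun (w : ℂ) (l : ℝ) => (l : ℂ) * ((1 - w * (l : ℂ)) ^ 2)⁻¹)
    (x₀ := w₀) (bound := fun _ => M * ((M + 1)⁻¹ ^ 2)⁻¹) (s := ball w₀ r₀) (ball_mem_nhds w₀ hr₀pos)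
    (.of_forall fun w => hmeas w) ?_ hmeas2 ?_ (integrable_const _) ?_
  · exact ⟨key.2, key.1⟩
  · refine (integrable_const ((M + 1)⁻¹)⁻¹).mono' (hmeas w₀) ?_
    filter_upwards [ae_abs_le hc] with l hl
    rw [norm_inv]
    exact inv_anti₀ (by positivity)
      (norm_one_sub_ge hM0 (hball_norm w₀ (mem_ball_self hr₀pos)) hl)
  · filter_upwards [ae_abs_le hc] with l hl w hw
    have hb := norm_one_sub_ge hM0 (hball_norm w hw) hl
    rw [norm_mul, norm_inv, norm_pow, Complex.norm_real, Real.norm_eq_abs]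
    refine mul_le_mul hl (inv_anti₀ (by positivity) (pow_le_pow_left₀ (by positivity) hb 2))
      (by positivity) hM0
  · filter_upwards [ae_abs_le hc] with l hl w hw
    have hb := norm_one_sub_ge hM0 (hball_norm w hw) hl
    have hne : 1 - w * (l : ℂ) ≠ 0 := by
      intro h
      rw [h, norm_zero] at hb
      have : 0 < (M + 1)⁻¹ := by positivity
      linarith
    have h0 : HasDerivAt (fun w : ℂ => 1 - w * (l : ℂ)) (-(l : ℂ)) w := by
      simpa using (hasDerivAt_mul_const (l : ℂ)).const_sub (1 : ℂ)
    have := h0.inv hne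
    convert this using 1
    · rfl
    · ext x; simp [Pi.inv_apply, mul_comm]
    · ring

lemma NC_analyticAt_zero (hc : HasCompactSupp μ) : AnalyticAt ℂ (NC μ) 0 := by
  have hop : IsOpen (ball (0 : ℂ) ((2 * (Mb μ + 1))⁻¹)) := isOpen_ball
  refine (DifferentiableOn.analyticOnNhd (fun w hw => ?_) hop) 0
    (mem_ball_self (by have := Mb_nonneg (μ := μ); positivity))
  rw [mem_ball, dist_zero_right] at hw
  exact ((NC_hasDerivAt_and_integrable hc hw).1.differentiableAt).differentiableWithinAt

lemma NC_real (t : ℝ) : NC μ (t : ℂ) = ((∫ l, (1 - t * l)⁻¹ ∂μ : ℝ) : ℂ) := by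
  rw [NC, show (fun l : ℝ => (1 - (t : ℂ) * (l : ℂ))⁻¹) = fun l : ℝ =>
      ((((1 - t * l)⁻¹ : ℝ)) : ℂ) by funext l; push_cast; ring]
  exact integral_ofReal

lemma NC_conj (z : ℂ) : NC μ ((starRingEnd ℂ) z) = (starRingEnd ℂ) (NC μ z) := by
  rw [NC, NC, ← integral_conj]
  congr 1
  funext l
  rw [map_inv₀, map_sub, map_mul, Complex.conj_ofReal, map_one]

lemma NC_zero : NC μ 0 = 1 := by
  rw [NC]
  simp

lemma XC_real (t : ℝ) : XC μ (t : ℂ) = ((xr μ t : ℝ) : ℂ) := by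
  rw [XC, NC_real, xr]
  push_cast
  ring

lemma XC_conj (z : ℂ) : XC μ ((starRingEnd ℂ) z) = (starRingEnd ℂ) (XC μ z) := by
  rw [XC, XC, map_mul, NC_conj]

lemma XC_hasDerivAt_one (hc : HasCompactSupp μ) : HasDerivAt (XC μ) 1 0 := by
  have h0 : ‖(0 : ℂ)‖ < (2 * (Mb μ + 1))⁻¹ := by
    rw [norm_zero]; have := Mb_nonneg (μ := μ); positivity
  have h1 := (NC_hasDerivAt_and_integrable hc h0).1
  have h2 := (hasDerivAt_id (0 : ℂ)).mul h1
  have h3 : HasDerivAt (XC μ) (1 * NC μ 0 + id 0 * ∫ l, (l : ℂ) * ((1 - 0 * (l : ℂ)) ^ 2)⁻¹ ∂μ) 0 := h2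
  simpa [NC_zero] using h3

lemma XC_analyticAt_zero (hc : HasCompactSupp μ) : AnalyticAt ℂ (XC μ) 0 :=
  analyticAt_id.mul (NC_analyticAt_zero hc)

lemma Gst_XC_rel (hc : HasCompactSupp μ) {t : ℝ} (ht : t ≠ 0)
    (htb : |t| < (Mb μ + 1)⁻¹) :
    Gst μ t⁻¹ = -(xr μ t) ∧ t⁻¹ ∈ Sreal μ := by
  have hM0 : 0 ≤ Mb μ := Mb_nonneg
  have habs : Mb μ + 1 < |t⁻¹| := by
    rw [abs_inv]
    rw [show Mb μ + 1 = ((Mb μ + 1)⁻¹)⁻¹ by rw [inv_inv]]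
    exact inv_strictAnti₀ (abs_pos.2 ht) htb
  have haM : |aInf μ| ≤ Mb μ := le_max_left _ _
  have hbM : |bSup μ| ≤ Mb μ := le_max_right _ _
  have hmem : t⁻¹ ∈ Sreal μ := by
    rcases lt_or_gt_of_ne ht with hneg | hpos
    · left
      rw [mem_Iio]
      have h1 : t⁻¹ < 0 := inv_lt_zero.2 hneg
      have h2 : |t⁻¹| = -t⁻¹ := abs_of_neg h1
      have := neg_abs_le (aInf μ)
      calc t⁻¹ = -|t⁻¹| := by rw [h2]; ring
      _ < -(Mb μ) := by linarith
      _ ≤ -|aInf μ| := by linarith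
      _ ≤ aInf μ := neg_abs_le _
    · right
      rw [mem_Ioi]
      have h1 : 0 < t⁻¹ := inv_pos.2 hpos
      have h2 : |t⁻¹| = t⁻¹ := abs_of_pos h1
      calc bSup μ ≤ |bSup μ| := le_abs_self _
      _ ≤ Mb μ := hbM
      _ < t⁻¹ := by rw [← h2]; linarith
  refine ⟨?_, hmem⟩
  have hcong : ∀ᵐ (l : ℝ) ∂μ, (l - t⁻¹)⁻¹ = -t * (1 - t * l)⁻¹ := by
    filter_upwards [ae_abs_le hc] with l hl
    have hne : 1 - t * l ≠ 0 := by
      intro h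
      have h1 : |t * l| < 1 := by
        rw [abs_mul]
        calc |t| * |l| ≤ (Mb μ + 1)⁻¹ * Mb μ :=
          mul_le_mul htb.le hl (abs_nonneg _) (by positivity)
        _ < 1 := by
          have hlt : (Mb μ + 1)⁻¹ * Mb μ < (Mb μ + 1)⁻¹ * (Mb μ + 1) :=
            mul_lt_mul_of_pos_left (by linarith) (by positivity)
          rwa [inv_mul_cancel₀ (by positivity : (0:ℝ) < Mb μ + 1).ne'] at hlt
      rw [sub_eq_zero] at h
      rw [← h] at h1
      simp at h1
    have hlt : l - t⁻¹ = -(1 - t * l) / t := by field_simp; ring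
    rw [hlt, inv_div, div_neg, div_eq_mul_inv, ← neg_mul]
  rw [Gst, integral_congr_ae hcong]
  have : ∫ l, -t * (1 - t * l)⁻¹ ∂μ = -t * ∫ l, (1 - t * l)⁻¹ ∂μ := integral_const_mul _ _
  rw [this, xr]
  ring

end St9
end

noncomputable section
namespace St9
set_option linter.unusedSectionVars false
open MeasureTheory Filter Set Metric Complex

variable {μ : Measure ℝ} [IsProbabilityMeasure μ]

lemma analyticAt_re_ofReal {F : ℂ → ℂ} {x : ℝ} (hF : AnalyticAt ℂ F ((x : ℝ) : ℂ)) :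
    AnalyticAt ℝ (fun t : ℝ => (F ((t : ℝ) : ℂ)).re) x := by
  have h4 : AnalyticAt ℝ F ((x : ℝ) : ℂ) := hF.restrictScalars
  have h5 : AnalyticAt ℝ (fun w : ℝ => (w : ℂ)) x := Complex.ofRealCLM.analyticAt x
  have h6 : AnalyticAt ℝ (fun w : ℝ => F (w : ℂ)) x := h4.comp h5
  have h7 : AnalyticAt ℝ (⇑Complex.reCLM) (F ((x : ℝ) : ℂ)) := Complex.reCLM.analyticAt _
  have h8 : AnalyticAt ℝ ((⇑Complex.reCLM) ∘ fun w : ℝ => F (w : ℂ)) x :=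
    AnalyticAt.comp (g := ⇑Complex.reCLM) (f := fun w : ℝ => F (w : ℂ)) (x := x) h7 h6
  exact h8.congr (Filter.Eventually.of_forall fun w => by
    simp [Function.comp, Complex.reCLM_apply])

lemma analyticAt_dslope {f : ℝ → ℝ} {x : ℝ} (hf : AnalyticAt ℝ f x) :
    AnalyticAt ℝ (dslope f x) x := by
  obtain ⟨p, hp⟩ := hf
  exact ⟨p.fslope, hp.has_fpower_series_dslope_fslope⟩

/-- The analytic extension of `Rhat` across `0`. -/
lemma exists_ext_zero (hc : HasCompactSupp μ) :
    ∃ h : ℝ → ℝ, AnalyticAt ℝ h 0 ∧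
      ∀ᶠ u in nhdsWithin (0 : ℝ) {(0 : ℝ)}ᶜ, h u = Rhat μ u := by
  have hM0 : 0 ≤ Mb μ := Mb_nonneg
  have hr₀pos : 0 < (2 * (Mb μ + 1))⁻¹ := by positivity
  -- local inverse of XC at 0
  have hXA : AnalyticAt ℂ (XC μ) 0 := XC_analyticAt_zero hc
  have hXD : HasDerivAt (XC μ) 1 0 := XC_hasDerivAt_one hc
  have hXd : deriv (XC μ) 0 ≠ 0 := by rw [hXD.deriv]; exact one_ne_zero
  have hX0 : XC μ (((0 : ℝ)) : ℂ) = (((0 : ℝ)) : ℂ) := by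
    rw [Complex.ofReal_zero, XC, zero_mul]
  have hXA' : AnalyticAt ℂ (XC μ) (((0 : ℝ)) : ℂ) := by rwa [Complex.ofReal_zero]
  have hXd' : deriv (XC μ) (((0 : ℝ)) : ℂ) ≠ 0 := by rwa [Complex.ofReal_zero]
  obtain ⟨k, hk_an, hk0, hk_ev⟩ := real_local_inverse hXA' hXd' hX0 (XC_conj)
  -- basic properties of k
  have hk_cont : ContinuousAt k 0 := hk_an.continuousAt
  have hk_small : ∀ᶠ u in nhds (0 : ℝ), |k u| < (2 * (Mb μ + 1))⁻¹ := by
    have : ContinuousAt (fun u => |k u|) 0 := hk_cont.abs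
    have h0 : |k 0| = 0 := by rw [hk0]; exact abs_zero
    exact this.eventually_lt continuousAt_const (by rw [h0]; exact hr₀pos)
  -- xr is the real version of XC
  have hxr_eq : ∀ᶠ u in nhds (0 : ℝ), xr μ (k u) = u := by
    filter_upwards [hk_ev] with u hu
    have : ((xr μ (k u) : ℝ) : ℂ) = ((u : ℝ) : ℂ) := by rw [← XC_real, hu]
    exact_mod_cast this
  -- derivative of k at 0 is 1
  have hxr_an : AnalyticAt ℝ (xr μ) 0 := by
    have := analyticAt_re_ofReal (x := (0 : ℝ)) (F := XC μ) hXA'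
    refine this.congr (Filter.Eventually.of_forall fun t => ?_)
    show (XC μ ((t : ℝ) : ℂ)).re = xr μ t
    rw [XC_real, Complex.ofReal_re]
  have hxr_deriv : HasDerivAt (xr μ) 1 0 := by
    have h1 : HasDerivAt (fun t : ℝ => (XC μ ((t : ℝ) : ℂ)).re) ((1 : ℂ)).re 0 := by
      refine HasDerivAt.real_of_complex ?_
      rwa [← Complex.ofReal_zero] at hXD
    rw [Complex.one_re] at h1
    refine h1.congr_of_eventuallyEq (Filter.Eventually.of_forall fun t => ?_)
    show xr μ t = (XC μ ((t : ℝ) : ℂ)).re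
    rw [XC_real, Complex.ofReal_re]
  have hk_deriv : deriv k 0 = 1 := by
    have hdiff_k : DifferentiableAt ℝ k 0 := hk_an.differentiableAt
    have hdiff_xr : DifferentiableAt ℝ (xr μ) (k 0) := by
      rw [hk0]; exact hxr_deriv.differentiableAt
    have hcomp : deriv (xr μ ∘ k) 0 = deriv (xr μ) (k 0) * deriv k 0 :=
      deriv_comp 0 hdiff_xr hdiff_k
    have hid : deriv (xr μ ∘ k) 0 = 1 := by
      have : (xr μ ∘ k) =ᶠ[nhds (0 : ℝ)] id := by
        filter_upwards [hxr_eq] with u hu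
        exact hu
      rw [this.deriv_eq, deriv_id]
    rw [hid, hk0, hxr_deriv.deriv, one_mul] at hcomp
    exact hcomp.symm
  -- build the quotient expression
  set q : ℝ → ℝ := dslope k 0 with hq
  set s1 : ℝ → ℝ := dslope (fun u => u - k u) 0 with hs1
  set s2 : ℝ → ℝ := dslope s1 0 with hs2
  have hq_an : AnalyticAt ℝ q 0 := analyticAt_dslope hk_an
  have hs_an : AnalyticAt ℝ (fun u => u - k u) 0 := analyticAt_id.sub hk_an
  have hs1_an : AnalyticAt ℝ s1 0 := analyticAt_dslope hs_an
  have hs2_an : AnalyticAt ℝ s2 0 := analyticAt_dslope hs1_an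
  have hq0 : q 0 = 1 := by rw [hq, dslope_same, hk_deriv]
  have hs1_0 : s1 0 = 0 := by
    rw [hs1, dslope_same]
    have : HasDerivAt (fun u : ℝ => u - k u) (1 - deriv k 0) 0 :=
      (hasDerivAt_id 0).sub hk_an.differentiableAt.hasDerivAt
    rw [this.deriv, hk_deriv, sub_self]
  have hh_an : AnalyticAt ℝ (fun u => s2 u / q u) 0 :=
    hs2_an.div hq_an (by rw [hq0]; exact one_ne_zero)
  refine ⟨fun u => s2 u / q u, hh_an, ?_⟩
  have hev : ∀ᶠ u in nhds (0 : ℝ),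
      (xr μ (k u) = u ∧ |k u| < (2 * (Mb μ + 1))⁻¹) := hxr_eq.and hk_small
  refine (eventually_nhdsWithin_of_eventually_nhds hev).mp
    (eventually_mem_nhdsWithin.mono ?_)
  intro u hu ⟨hu1, hu2⟩
  have h0 : u ≠ 0 := hu
  have hku : k u ≠ 0 := by
    intro h
    rw [h] at hu1
    rw [xr, zero_mul] at hu1
    exact h0 hu1.symm
  -- Rhat u = (k u)⁻¹ - u⁻¹
  have htb : |k u| < (Mb μ + 1)⁻¹ := by
    refine lt_of_lt_of_le hu2 ?_
    apply inv_anti₀ (by positivity)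
    nlinarith [hM0]
  obtain ⟨hGrel, hmem⟩ := Gst_XC_rel hc hku htb
  rw [hu1] at hGrel
  have hGinv : Ginv μ (-u) = (k u)⁻¹ := Ginv_eq hc hmem hGrel
  have hRhat : Rhat μ u = (k u)⁻¹ - u⁻¹ := by rw [Rhat, hGinv]
  -- h u = Rhat u
  have hqu : q u = k u / u := by
    rw [hq, dslope_of_ne _ h0, slope_def_field, hk0, sub_zero, sub_zero]
  have hs1u : s1 u = (u - k u) / u := by
    rw [hs1, dslope_of_ne _ h0, slope_def_field]
    rw [hk0, sub_zero, sub_zero, sub_zero]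
  have hs2u : s2 u = (u - k u) / u / u := by
    rw [hs2, dslope_of_ne _ h0, slope_def_field, hs1_0, sub_zero, sub_zero, hs1u]
  show s2 u / q u = Rhat μ u
  rw [hRhat, hs2u, hqu]
  field_simp

end St9
end

noncomputable section
namespace St9
set_option linter.unusedSectionVars false
open MeasureTheory Filter Set Metric Complex

variable {μ : Measure ℝ} [IsProbabilityMeasure μ]

/-- A candidate analytic extension of `Rhat`. -/
def Cand (μ : Measure ℝ) (D : Set ℝ) (f : ℝ → ℝ) : Prop :=
  IsOpen D ∧ D.OrdConnected ∧ Dhat μ ⊆ D ∧ AnalyticOnNhd ℝ f D ∧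
    ∀ u ∈ Dhat μ, u ≠ 0 → f u = Rhat μ u

lemma cand_exists (hc : HasCompactSupp μ) : ∃ f : ℝ → ℝ, Cand μ (Dhat μ) f := by
  classical
  obtain ⟨h, hh_an, hh_ev⟩ := exists_ext_zero hc
  refine ⟨fun u => if u = 0 then h 0 else Rhat μ u, isOpen_Dhat, ordConnected_Dhat,
    subset_rfl, ?_, ?_⟩
  · intro u hu
    by_cases h0 : u = 0
    · subst h0
      refine hh_an.congr ?_
      rw [eventually_nhdsWithin_iff] at hh_ev
      filter_upwards [hh_ev] with v hv
      by_cases hv0 : v = 0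
      · subst hv0; simp
      · simp only [if_neg hv0]
        exact hv hv0
    · refine (analyticAt_Rhat hc hu h0).congr ?_
      have hne : ∀ᶠ v in nhds u, v ≠ 0 :=
        (isOpen_compl_singleton.mem_nhds (by simpa using h0))
      filter_upwards [hne] with v hv
      simp [if_neg hv]
  · intro u _ h0
    simp [if_neg h0]

lemma cand_eqOn (hc : HasCompactSupp μ) {D D' : Set ℝ} {f f' : ℝ → ℝ}
    (h1 : Cand μ D f) (h2 : Cand μ D' f') : Set.EqOn f f' (D ∩ D') := by
  obtain ⟨hD, hDc, hDh, hf, hfr⟩ := h1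
  obtain ⟨hD', hDc', hDh', hf', hfr'⟩ := h2
  refine AnalyticOnNhd.eqOn_of_preconnected_of_frequently_eq
    (fun x hx => hf x hx.1) (fun x hx => hf' x hx.2)
    ((hDc.inter hDc').isPreconnected)
    (⟨hDh (zero_mem_Dhat hc), hDh' (zero_mem_Dhat hc)⟩ : (0:ℝ) ∈ D ∩ D') ?_
  have h4 : ∀ᶠ v in nhds (0 : ℝ), v ∈ Dhat μ := isOpen_Dhat.mem_nhds (zero_mem_Dhat hc)
  have h3 : ∀ᶠ v in nhdsWithin (0 : ℝ) {(0:ℝ)}ᶜ, f v = f' v := by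
    refine (eventually_nhdsWithin_of_eventually_nhds h4).mp
      (eventually_mem_nhdsWithin.mono ?_)
    intro v hv hvD
    rw [hfr v hvD hv, hfr' v hvD hv]
  exact h3.frequently

end St9
end


/-- existence and uniqueness of the maximal real analytic extension
`R_μ : D_μ → ℝ` of the real `R`-transform `R̂_μ`. -/
theorem statement9 (μ : MeasureTheory.Measure ℝ) [MeasureTheory.IsProbabilityMeasure μ]
    (hc : HasCompactSupp μ) :
    ∃ (Dm : Set ℝ) (Rm : ℝ → ℝ),
      (IsOpen Dm ∧ Dm.OrdConnected ∧ Dhat μ ⊆ Dm ∧ AnalyticOnNhd ℝ Rm Dm ∧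
        (∀ u ∈ Dhat μ, u ≠ 0 → Rm u = Rhat μ u) ∧
        (∀ (D : Set ℝ) (f : ℝ → ℝ), IsOpen D → D.OrdConnected → Dhat μ ⊆ D →
          AnalyticOnNhd ℝ f D → (∀ u ∈ Dhat μ, u ≠ 0 → f u = Rhat μ u) →
          D ⊆ Dm ∧ Set.EqOn f Rm D)) ∧
      (∀ (Dm' : Set ℝ) (Rm' : ℝ → ℝ),
        (IsOpen Dm' ∧ Dm'.OrdConnected ∧ Dhat μ ⊆ Dm' ∧ AnalyticOnNhd ℝ Rm' Dm' ∧
          (∀ u ∈ Dhat μ, u ≠ 0 → Rm' u = Rhat μ u) ∧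
          (∀ (D : Set ℝ) (f : ℝ → ℝ), IsOpen D → D.OrdConnected → Dhat μ ⊆ D →
            AnalyticOnNhd ℝ f D → (∀ u ∈ Dhat μ, u ≠ 0 → f u = Rhat μ u) →
            D ⊆ Dm' ∧ Set.EqOn f Rm' D)) →
        Dm' = Dm ∧ Set.EqOn Rm' Rm Dm) := by
  classical
  set Dm : Set ℝ := {u | ∃ p : Set ℝ × (ℝ → ℝ), St9.Cand μ p.1 p.2 ∧ u ∈ p.1} with hDmdef
  set Rm : ℝ → ℝ := fun u =>
    if hu : ∃ p : Set ℝ × (ℝ → ℝ), St9.Cand μ p.1 p.2 ∧ u ∈ p.1 then hu.choose.2 u else 0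
    with hRmdef
  -- the key gluing fact
  have key : ∀ (D : Set ℝ) (f : ℝ → ℝ), St9.Cand μ D f → ∀ u ∈ D, Rm u = f u := by
    intro D f hDf u hu
    have hex : ∃ p : Set ℝ × (ℝ → ℝ), St9.Cand μ p.1 p.2 ∧ u ∈ p.1 := ⟨(D, f), hDf, hu⟩
    obtain ⟨hc1, hm⟩ := hex.choose_spec
    have : Rm u = hex.choose.2 u := by rw [hRmdef]; exact dif_pos hex
    rw [this]
    exact St9.cand_eqOn hc hc1 hDf ⟨hm, hu⟩
  obtain ⟨f₀, hf₀⟩ := St9.cand_exists hc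
  have hDm_open : IsOpen Dm := by
    rw [isOpen_iff_mem_nhds]
    rintro u ⟨p, hp, hup⟩
    exact Filter.mem_of_superset (hp.1.mem_nhds hup) (fun v hv => ⟨p, hp, hv⟩)
  have hDm_ord : Dm.OrdConnected := by
    constructor
    rintro x ⟨p, hp, hxp⟩ y ⟨p', hp', hyp'⟩ z hz
    have h0p : (0 : ℝ) ∈ p.1 := hp.2.2.1 (St9.zero_mem_Dhat hc)
    have h0p' : (0 : ℝ) ∈ p'.1 := hp'.2.2.1 (St9.zero_mem_Dhat hc)
    rcases le_total z 0 with hz0 | hz0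
    · exact ⟨p, hp, hp.2.1.out hxp h0p ⟨hz.1, hz0⟩⟩
    · exact ⟨p', hp', hp'.2.1.out h0p' hyp' ⟨hz0, hz.2⟩⟩
  have hDm_sub : Dhat μ ⊆ Dm := fun u hu => ⟨(Dhat μ, f₀), hf₀, hu⟩
  have hDm_an : AnalyticOnNhd ℝ Rm Dm := by
    rintro u ⟨p, hp, hup⟩
    refine (hp.2.2.2.1 u hup).congr ?_
    filter_upwards [hp.1.mem_nhds hup] with v hv
    exact (key p.1 p.2 hp v hv).symm
  have hDm_agr : ∀ u ∈ Dhat μ, u ≠ 0 → Rm u = Rhat μ u := by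
    intro u hu h0
    rw [key (Dhat μ) f₀ hf₀ u hu]
    exact hf₀.2.2.2.2 u hu h0
  have hDm_max : ∀ (D : Set ℝ) (f : ℝ → ℝ), IsOpen D → D.OrdConnected → Dhat μ ⊆ D →
      AnalyticOnNhd ℝ f D → (∀ u ∈ Dhat μ, u ≠ 0 → f u = Rhat μ u) →
      D ⊆ Dm ∧ Set.EqOn f Rm D := by
    intro D f ho hoc hsub han hagr
    have hcand : St9.Cand μ D f := ⟨ho, hoc, hsub, han, hagr⟩
    exact ⟨fun u hu => ⟨(D, f), hcand, hu⟩, fun u hu => (key D f hcand u hu).symm⟩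
  refine ⟨Dm, Rm, ⟨hDm_open, hDm_ord, hDm_sub, hDm_an, hDm_agr, hDm_max⟩, ?_⟩
  rintro Dm' Rm' ⟨ho', hoc', hsub', han', hagr', hmax'⟩
  have h1 : Dm' ⊆ Dm ∧ Set.EqOn Rm' Rm Dm' := hDm_max Dm' Rm' ho' hoc' hsub' han' hagr'
  have h2 : Dm ⊆ Dm' ∧ Set.EqOn Rm Rm' Dm := hmax' Dm Rm hDm_open hDm_ord hDm_sub hDm_an hDm_agr
  exact ⟨Set.Subset.antisymm h1.1 h2.1, h2.2.symm⟩
end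

section
/- Let ρ be a nondegenerate (not a point mass) compactly supported probability measure on ℝ. Then for every t ∈ D̂_ρ with t ≠ 0, the real R-transform R̂_ρ is differentiable at t and R̂_ρ′(t) > 0. -/
open MeasureTheory Filter Set

namespace Statement11Aux

open MeasureTheory Filter Set Metric
open scoped Topology

theorem msupp_compl_null (μ : Measure ℝ) : μ (msupp μ)ᶜ = 0 := by
  apply measure_null_of_locally_null
  intro x hx
  simp only [msupp, mem_compl_iff, mem_setOf_eq, not_forall] at hx
  obtain ⟨U, hU, hU0⟩ := hx
  push_neg at hU0
  exact ⟨U, mem_nhdsWithin_of_mem_nhds hU, hU0⟩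

theorem msupp_subset {μ : Measure ℝ} [IsProbabilityMeasure μ] {K : Set ℝ}
    (hK : IsCompact K) (h1 : μ K = 1) : msupp μ ⊆ K := by
  intro x hx
  by_contra hxK
  have : μ Kᶜ = 0 := (prob_compl_eq_zero_iff (μ := μ) hK.isClosed.measurableSet).2 h1
  exact hx Kᶜ (hK.isClosed.isOpen_compl.mem_nhds hxK) this

theorem msupp_nonempty (μ : Measure ℝ) [IsProbabilityMeasure μ] : (msupp μ).Nonempty := by
  by_contra h
  rw [not_nonempty_iff_eq_empty] at h
  have := msupp_compl_null μ
  rw [h, compl_empty] at this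
  simp [measure_univ] at this

theorem eq_dirac_of_ae {μ : Measure ℝ} [IsProbabilityMeasure μ] {c : ℝ}
    (h : ∀ᵐ l ∂μ, l = c) : μ = Measure.dirac c := by
  have hc : μ {c}ᶜ = 0 := by
    rw [ae_iff] at h
    have h2 : {a : ℝ | ¬ a = c} = {c}ᶜ := by ext x; simp
    rwa [h2] at h
  ext s hs
  have h1 : μ (s \ {c}) = 0 :=
    measure_mono_null (fun x hx => hx.2) hc
  have h2 : μ s = μ (s ∩ {c}) := by
    rw [← measure_inter_add_diff s (measurableSet_singleton c), h1, add_zero]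
  by_cases hcs : c ∈ s
  · have hsc : s ∩ {c} = {c} := by ext x; simp; rintro rfl; exact hcs
    rw [h2, hsc, Measure.dirac_apply' _ hs, indicator_of_mem hcs]
    have h3 : μ {c} + μ {c}ᶜ = 1 := by
      rw [measure_add_measure_compl (measurableSet_singleton c)]; exact measure_univ
    rw [hc, add_zero] at h3
    simp [h3]
  · have hsc : s ∩ {c} = ∅ := by ext x; simp; rintro hx rfl; exact hcs hx
    rw [h2, hsc, Measure.dirac_apply' _ hs, indicator_of_notMem hcs]
    simp

theorem sep_ball {a b z : ℝ} (hz : z ∉ Icc a b) :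
    ∃ ε > 0, ∀ l ∈ Icc a b, ∀ w ∈ ball z ε, ε ≤ |l - w| := by
  rcases lt_or_ge z a with h | h
  · refine ⟨(a - z)/2, by linarith, fun l hl w hw => ?_⟩
    rw [mem_ball, Real.dist_eq] at hw
    have h5 := abs_lt.1 hw
    have h6 : (a - z)/2 ≤ l - w := by
      obtain ⟨h1,h2⟩ := hl; obtain ⟨h3,h4⟩ := h5; linarith
    calc (a-z)/2 ≤ l - w := h6
      _ ≤ |l - w| := le_abs_self _
  · have hb : b < z := by
      by_contra hb; push_neg at hb; exact hz ⟨h, hb⟩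
    refine ⟨(z - b)/2, by linarith, fun l hl w hw => ?_⟩
    rw [mem_ball, Real.dist_eq] at hw
    have h5 := abs_lt.1 hw
    have h6 : (z - b)/2 ≤ w - l := by
      obtain ⟨h1,h2⟩ := hl; obtain ⟨h3,h4⟩ := h5; linarith
    calc (z-b)/2 ≤ w - l := h6
      _ ≤ |w - l| := le_abs_self _
      _ = |l - w| := abs_sub_comm _ _

theorem integrable_inv_sub (ρ : Measure ℝ) [IsProbabilityMeasure ρ] {a b z : ℝ}
    (hae : ∀ᵐ l ∂ρ, l ∈ Icc a b) (hz : z ∉ Icc a b) :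
    Integrable (fun l : ℝ => (l - z)⁻¹) ρ := by
  obtain ⟨ε, hε, hsep⟩ := sep_ball hz
  refine (integrable_const ε⁻¹).mono'
    ((measurable_id.sub_const z).inv).aestronglyMeasurable ?_
  filter_upwards [hae] with l hl
  have h1 := hsep l hl z (mem_ball_self hε)
  rw [Real.norm_eq_abs, abs_inv]
  exact inv_anti₀ hε h1

theorem hasDerivAt_Gst (ρ : Measure ℝ) [IsProbabilityMeasure ρ] {a b z : ℝ}
    (hae : ∀ᵐ l ∂ρ, l ∈ Icc a b) (hz : z ∉ Icc a b) :
    HasDerivAt (Gst ρ) (∫ l, ((l - z)^2)⁻¹ ∂ρ) z ∧ Integrable (fun l => ((l - z)^2)⁻¹) ρ := by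
  obtain ⟨ε, hε, hsep⟩ := sep_ball hz
  have meas : ∀ w : ℝ, AEStronglyMeasurable (fun l : ℝ => (l - w)⁻¹) ρ :=
    fun w => ((measurable_id.sub_const w).inv).aestronglyMeasurable
  have meas2 : AEStronglyMeasurable (fun l : ℝ => ((l - z)^2)⁻¹) ρ :=
    (((measurable_id.sub_const z).pow_const 2).inv).aestronglyMeasurable
  have hint : Integrable (fun l : ℝ => (l - z)⁻¹) ρ := integrable_inv_sub ρ hae hz
  have key := hasDerivAt_integral_of_dominated_loc_of_deriv_le (μ := ρ)
    (F := fun w l => (l - w)⁻¹) (F' := fun w l => ((l - w)^2)⁻¹)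
    (bound := fun _ => (ε^2)⁻¹) (ball_mem_nhds z hε)
    (Eventually.of_forall fun w => meas w) hint meas2 ?_ (integrable_const _) ?_
  · exact ⟨key.2, key.1⟩
  · filter_upwards [hae] with l hl
    intro w hw
    have h1 := hsep l hl w hw
    rw [Real.norm_eq_abs, abs_inv, abs_pow]
    refine inv_anti₀ (by positivity) ?_
    have h2 : ε ^ 2 ≤ |l - w| ^ 2 := pow_le_pow_left₀ hε.le h1 2
    simpa using h2
  · filter_upwards [hae] with l hl
    intro w hw
    have h1 := hsep l hl w hw
    have hne : l - w ≠ 0 := by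
      intro h0
      rw [h0, abs_zero] at h1; linarith
    have h2 : HasDerivAt (fun w : ℝ => l - w) (-1) w := by
      simpa using (hasDerivAt_id w).const_sub l
    have h3 := h2.inv hne
    convert h3 using 1
    · rfl
    · rfl
    · ring

theorem sq_Gst_lt (ρ : Measure ℝ) [IsProbabilityMeasure ρ] {a b z : ℝ}
    (hae : ∀ᵐ l ∂ρ, l ∈ Icc a b) (hz : z ∉ Icc a b)
    (hnd : Nondeg ρ) :
    (Gst ρ z)^2 < ∫ l, ((l - z)^2)⁻¹ ∂ρ := by
  obtain ⟨ε, hε, hsep⟩ := sep_ball hz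
  set f : ℝ → ℝ := fun l => (l - z)⁻¹ with hf
  have hbd : ∀ᵐ l ∂ρ, |f l| ≤ ε⁻¹ := by
    filter_upwards [hae] with l hl
    have h1 := hsep l hl z (mem_ball_self hε)
    rw [abs_inv]
    exact inv_anti₀ hε h1
  have measf : AEStronglyMeasurable f ρ :=
    ((measurable_id.sub_const z).inv).aestronglyMeasurable
  have hif : Integrable f ρ := integrable_inv_sub ρ hae hz
  have hif2 : Integrable (fun l => f l ^ 2) ρ := by
    refine (integrable_const (ε⁻¹^2)).mono' (measf.pow 2) ?_
    filter_upwards [hbd] with l hl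
    rw [Real.norm_eq_abs, abs_pow]
    exact pow_le_pow_left₀ (abs_nonneg _) hl 2
  set m : ℝ := ∫ l, f l ∂ρ with hm
  have hGm : Gst ρ z = m := rfl
  set g : ℝ → ℝ := fun l => (f l - m)^2 with hg
  have hig : Integrable g ρ := by
    have h4 : g = fun l => f l ^ 2 - 2*m* f l + m^2 := by
      ext l; simp only [hg]; ring
    rw [h4]
    exact (hif2.sub ((hif.const_mul (2*m)))).add (integrable_const _)
  have hgint : ∫ l, g l ∂ρ = (∫ l, f l ^2 ∂ρ) - m^2 := by
    have h4 : g = fun l => f l ^ 2 - 2*m* f l + m^2 := by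
      ext l; simp only [hg]; ring
    rw [h4, integral_add (by exact hif2.sub (hif.const_mul (2*m)) :
        Integrable (fun l => f l ^ 2 - 2*m*f l) ρ) (integrable_const _),
      integral_sub hif2 (hif.const_mul (2*m)), integral_const_mul, integral_const]
    simp [← hm]
    ring
  have hgpos : 0 < ∫ l, g l ∂ρ := by
    rcases lt_or_eq_of_le (integral_nonneg (f := g) (μ := ρ) (fun l => show (0:ℝ) ≤ (f l - m)^2 from sq_nonneg _)) with h | h
    · exact h
    have h0 : ∫ l, g l ∂ρ = 0 := h.symm
    rw [integral_eq_zero_iff_of_nonneg (fun l => show (0:ℝ) ≤ (f l - m)^2 from sq_nonneg _) hig] at h0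
    have hfm : ∀ᵐ l ∂ρ, f l = m := by
      filter_upwards [h0] with l hl
      have h5 : (f l - m)^2 = 0 := hl
      nlinarith [sq_nonneg (f l - m)]
    by_cases hm0 : m = 0
    · have habs : ∀ᵐ l ∂ρ, False := by
        filter_upwards [hfm, hae] with l h1 h2
        have hlz : l - z ≠ 0 := by
          intro h3
          exact hz (by rwa [sub_eq_zero.1 h3] at h2)
        rw [hm0] at h1
        exact hlz (inv_eq_zero.1 h1)
      have h5 : ρ univ = 0 := by
        rw [ae_iff] at habs
        simpa using habs
      rw [measure_univ] at h5
      exact absurd h5 one_ne_zero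
    · exfalso
      apply hnd
      refine ⟨z + m⁻¹, ?_⟩
      apply eq_dirac_of_ae
      filter_upwards [hfm, hae] with l h1 h2
      have hlz : l - z ≠ 0 := by
        intro h3
        exact hz (by rwa [sub_eq_zero.1 h3] at h2)
      have h6 : l - z = m⁻¹ := by
        rw [← h1]; simp [hf, hlz]
      linarith
  have heq : ∫ l, ((l - z)^2)⁻¹ ∂ρ = ∫ l, f l ^ 2 ∂ρ := by
    congr 1; ext l; rw [hf]; rw [← inv_pow]
  rw [heq, hGm]
  linarith

theorem Gst_pos (ρ : Measure ℝ) [IsProbabilityMeasure ρ] {a b z : ℝ}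
    (hae : ∀ᵐ l ∂ρ, l ∈ Icc a b) (hab : a ≤ b) (hz : z < a) : 0 < Gst ρ z := by
  have hz' : z ∉ Icc a b := fun h => absurd h.1 (not_le.2 hz)
  have hint := integrable_inv_sub ρ hae hz'
  have hmono : (∫ _l, (b - z)⁻¹ ∂ρ) ≤ ∫ l, (l - z)⁻¹ ∂ρ := by
    apply integral_mono_ae (integrable_const _) hint
    filter_upwards [hae] with l hl
    exact inv_anti₀ (by linarith [hl.1] : (0:ℝ) < l - z) (by linarith [hl.2])
  have h1 : (0:ℝ) < (b - z)⁻¹ := inv_pos.2 (by linarith)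
  calc (0:ℝ) < (b - z)⁻¹ := h1
    _ = ∫ _l, (b - z)⁻¹ ∂ρ := by simp
    _ ≤ _ := hmono

theorem Gst_neg (ρ : Measure ℝ) [IsProbabilityMeasure ρ] {a b z : ℝ}
    (hae : ∀ᵐ l ∂ρ, l ∈ Icc a b) (hab : a ≤ b) (hz : b < z) : Gst ρ z < 0 := by
  have hz' : z ∉ Icc a b := fun h => absurd h.2 (not_le.2 hz)
  have hint := integrable_inv_sub ρ hae hz'
  have hmono : (∫ l, (l - z)⁻¹ ∂ρ) ≤ ∫ _l, (a - z)⁻¹ ∂ρ := by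
    apply integral_mono_ae hint (integrable_const _)
    filter_upwards [hae] with l hl
    have h1 : l - z < 0 := by linarith [hl.2]
    have h2 : a - z ≤ l - z := by linarith [hl.1]
    have h3 : a - z < 0 := by linarith
    rw [inv_le_inv_of_neg h1 h3]
    exact h2
  have h1 : (a - z)⁻¹ < 0 := inv_lt_zero.2 (by linarith)
  calc Gst ρ z ≤ ∫ _l, (a - z)⁻¹ ∂ρ := hmono
    _ = (a - z)⁻¹ := by simp
    _ < 0 := h1

theorem strictMonoOn_Gst (ρ : Measure ℝ) [IsProbabilityMeasure ρ] {a b : ℝ}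
    (hae : ∀ᵐ l ∂ρ, l ∈ Icc a b) (hnd : Nondeg ρ) {D : Set ℝ}
    (hD : Convex ℝ D) (hDc : ∀ z ∈ D, z ∉ Icc a b) : StrictMonoOn (Gst ρ) D := by
  apply strictMonoOn_of_deriv_pos hD
  · intro z hz
    exact ((hasDerivAt_Gst ρ hae (hDc z hz)).1).continuousAt.continuousWithinAt
  · intro z hz
    have hz' := hDc z (interior_subset hz)
    rw [(hasDerivAt_Gst ρ hae hz').1.deriv]
    have := sq_Gst_lt ρ hae hz' hnd
    nlinarith [sq_nonneg (Gst ρ z)]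

theorem Gst_tendsto_atTop (ρ : Measure ℝ) [IsProbabilityMeasure ρ] {a b : ℝ}
    (hae : ∀ᵐ l ∂ρ, l ∈ Icc a b) : Tendsto (Gst ρ) atTop (𝓝 0) := by
  apply squeeze_zero_norm' (a := fun z => (z - b)⁻¹)
  · filter_upwards [eventually_gt_atTop b] with z hz
    have h1 : ‖Gst ρ z‖ ≤ (z - b)⁻¹ * (ρ univ).toReal := by
      apply norm_integral_le_of_norm_le_const
      filter_upwards [hae] with l hl
      rw [Real.norm_eq_abs, abs_inv]
      apply inv_anti₀ (by linarith : (0:ℝ) < z - b)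
      rw [abs_sub_comm, abs_of_pos (by linarith [hl.2] : (0:ℝ) < z - l)]
      linarith [hl.2]
    simpa [measure_univ] using h1
  · apply tendsto_inv_atTop_zero.comp
    exact tendsto_atTop_add_const_right atTop (-b) tendsto_id

theorem Gst_tendsto_atBot (ρ : Measure ℝ) [IsProbabilityMeasure ρ] {a b : ℝ}
    (hae : ∀ᵐ l ∂ρ, l ∈ Icc a b) : Tendsto (Gst ρ) atBot (𝓝 0) := by
  apply squeeze_zero_norm' (a := fun w => (a - w)⁻¹)
  · filter_upwards [eventually_lt_atBot a] with z hz
    have h1 : ‖Gst ρ z‖ ≤ (a - z)⁻¹ * (ρ univ).toReal := by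
      apply norm_integral_le_of_norm_le_const
      filter_upwards [hae] with l hl
      rw [Real.norm_eq_abs, abs_inv]
      apply inv_anti₀ (by linarith : (0:ℝ) < a - z)
      rw [abs_of_pos (by linarith [hl.1] : (0:ℝ) < l - z)]
      linarith [hl.1]
    simpa [measure_univ] using h1
  · apply tendsto_inv_atTop_zero.comp
    have h2 : Tendsto (fun z : ℝ => -z) atBot atTop := tendsto_neg_atBot_atTop
    exact tendsto_atTop_add_const_left atBot a h2

end Statement11Aux

/-- for a nondegenerate compactly supported `ρ`, the real `R`-transform is
differentiable with positive derivative on `D̂_ρ ∖ {0}`. -/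


theorem statement11 (ρ : MeasureTheory.Measure ℝ) [MeasureTheory.IsProbabilityMeasure ρ]
    (hc : HasCompactSupp ρ) (hnd : Nondeg ρ) :
    ∀ t ∈ Dhat ρ, t ≠ 0 → DifferentiableAt ℝ (Rhat ρ) t ∧ 0 < deriv (Rhat ρ) t := by
  classical
  open Statement11Aux Metric in
  intro t ht htne
  obtain ⟨K, hK, hK1⟩ := hc
  set a := aInf ρ with ha
  set b := bSup ρ with hb
  have hsub : msupp ρ ⊆ K := msupp_subset hK hK1
  have hne : (msupp ρ).Nonempty := msupp_nonempty ρ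
  have hbb : BddBelow (msupp ρ) := hK.bddBelow.mono hsub
  have hba : BddAbove (msupp ρ) := hK.bddAbove.mono hsub
  have hmIcc : msupp ρ ⊆ Icc a b := fun x hx => ⟨csInf_le hbb hx, le_csSup hba hx⟩
  have hab : a ≤ b := by
    obtain ⟨x, hx⟩ := hne
    exact (hmIcc hx).1.trans (hmIcc hx).2
  have hae : ∀ᵐ l ∂ρ, l ∈ Icc a b := by
    rw [ae_iff]
    exact measure_mono_null (fun x hx => fun hxs => hx (hmIcc hxs)) (msupp_compl_null ρ)
  -- existence of z with Gst ρ z = -t in the right component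
  have hzex : ∃ z, (z ∈ Iio a ∪ Ioi b) ∧ Gst ρ z = -t := by
    rcases lt_or_gt_of_ne htne with htneg | htpos
    · -- t < 0 : use the left component
      have h1 : ((-t : ℝ) : EReal) < GaSup ρ := by
        have h2 := ht.1
        have h3 := EReal.neg_lt_neg_iff.2 h2
        rwa [neg_neg, ← EReal.coe_neg] at h3
      rw [GaSup, lt_sSup_iff] at h1
      obtain ⟨y, ⟨z₀, hz₀a, rfl⟩, hy⟩ := h1
      rw [EReal.coe_lt_coe_iff] at hy
      have htt : (0:ℝ) < -t := by linarith
      have hev : ∀ᶠ z in atBot, Gst ρ z < -t :=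
        (Gst_tendsto_atBot ρ hae).eventually (eventually_lt_nhds htt)
      obtain ⟨z₁, hz₁⟩ := (hev.and (eventually_le_atBot (min z₀ a))).exists
      have hz₁z₀ : z₁ ≤ z₀ := le_trans hz₁.2 (min_le_left _ _)
      have hcont : ContinuousOn (Gst ρ) (Icc z₁ z₀) := by
        intro w hw
        have hw' : w ∉ Icc a b := by
          intro hwin
          have : w < a := lt_of_le_of_lt hw.2 hz₀a
          exact absurd hwin.1 (not_le.2 this)
        exact ((hasDerivAt_Gst ρ hae hw').1).continuousAt.continuousWithinAt
      have hivt := intermediate_value_Icc hz₁z₀ hcont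
      have hmem : (-t) ∈ Icc (Gst ρ z₁) (Gst ρ z₀) := ⟨hz₁.1.le, hy.le⟩
      obtain ⟨z, hzmem, hz⟩ := hivt hmem
      exact ⟨z, Or.inl (lt_of_le_of_lt hzmem.2 hz₀a), hz⟩
    · -- t > 0 : use the right component
      have h1 : GbInf ρ < ((-t : ℝ) : EReal) := by
        have h2 := ht.2
        have h3 := EReal.neg_lt_neg_iff.2 h2
        rwa [neg_neg, ← EReal.coe_neg] at h3
      rw [GbInf, sInf_lt_iff] at h1
      obtain ⟨y, ⟨z₀, hz₀b, rfl⟩, hy⟩ := h1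
      rw [EReal.coe_lt_coe_iff] at hy
      have htt : -t < (0:ℝ) := by linarith
      have hev : ∀ᶠ z in atTop, -t < Gst ρ z :=
        (Gst_tendsto_atTop ρ hae).eventually (eventually_gt_nhds htt)
      obtain ⟨z₁, hz₁⟩ := (hev.and (eventually_ge_atTop (max z₀ b))).exists
      have hz₀z₁ : z₀ ≤ z₁ := le_trans (le_max_left _ _) hz₁.2
      have hcont : ContinuousOn (Gst ρ) (Icc z₀ z₁) := by
        intro w hw
        have hw' : w ∉ Icc a b := by
          intro hwin
          have : b < w := lt_of_lt_of_le hz₀b hw.1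
          exact absurd hwin.2 (not_le.2 this)
        exact ((hasDerivAt_Gst ρ hae hw').1).continuousAt.continuousWithinAt
      have hivt := intermediate_value_Icc hz₀z₁ hcont
      have hmem : (-t) ∈ Icc (Gst ρ z₀) (Gst ρ z₁) := ⟨hy.le, hz₁.1.le⟩
      obtain ⟨z, hzmem, hz⟩ := hivt hmem
      exact ⟨z, Or.inr (lt_of_lt_of_le hz₀b hzmem.1), hz⟩
  obtain ⟨z, hzS, hGz⟩ := hzex
  set S : Set ℝ := Iio a ∪ Ioi b with hS
  have hSnotin : ∀ w ∈ S, w ∉ Icc a b := by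
    rintro w (hw | hw) hwin
    · exact absurd hwin.1 (not_le.2 hw)
    · exact absurd hwin.2 (not_le.2 hw)
  -- injectivity on S
  have hinj : InjOn (Gst ρ) S := by
    have hmonoa : StrictMonoOn (Gst ρ) (Iio a) :=
      strictMonoOn_Gst ρ hae hnd (convex_Iio a)
        (fun w hw hwin => absurd hwin.1 (not_le.2 hw))
    have hmonob : StrictMonoOn (Gst ρ) (Ioi b) :=
      strictMonoOn_Gst ρ hae hnd (convex_Ioi b)
        (fun w hw hwin => absurd hwin.2 (not_le.2 hw))
    rintro x (hx | hx) y (hy | hy) hxy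
    · exact hmonoa.injOn hx hy hxy
    · exact absurd (hxy ▸ Gst_pos ρ hae hab hx) (not_lt.2 (Gst_neg ρ hae hab hy).le)
    · exact absurd (hxy ▸ Gst_neg ρ hae hab hx) (not_lt.2 (Gst_pos ρ hae hab hy).le)
    · exact hmonob.injOn hx hy hxy
  have hleft : ∀ x ∈ S, Ginv ρ (Gst ρ x) = x := fun x hx =>
    hinj.leftInvOn_invFunOn hx
  -- interval around z inside one component
  obtain ⟨ε, hε, hIsub⟩ : ∃ ε > 0, Icc (z - ε) (z + ε) ⊆ Iio a ∨
      Icc (z - ε) (z + ε) ⊆ Ioi b := by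
    rcases hzS with hz' | hz'
    · exact ⟨(a - z)/2, by simp at hz'; linarith,
        Or.inl (fun w hw => by simp at hz' ⊢; obtain ⟨h1, h2⟩ := hw; linarith)⟩
    · exact ⟨(z - b)/2, by simp at hz'; linarith,
        Or.inr (fun w hw => by simp at hz' ⊢; obtain ⟨h1, h2⟩ := hw; linarith)⟩
  set I : Set ℝ := Icc (z - ε) (z + ε) with hI
  have hIS : I ⊆ S := by
    rcases hIsub with h | h
    · exact fun w hw => Or.inl (h hw)
    · exact fun w hw => Or.inr (h hw)
  have hmono : StrictMonoOn (Gst ρ) I :=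
    strictMonoOn_Gst ρ hae hnd (convex_Icc _ _) (fun w hw => hSnotin w (hIS hw))
  have hcontI : ContinuousOn (Gst ρ) I := fun w hw =>
    ((hasDerivAt_Gst ρ hae (hSnotin w (hIS hw))).1).continuousAt.continuousWithinAt
  have hzmemI : z ∈ I := ⟨by linarith, by linarith⟩
  have hy1 : Gst ρ (z - ε) < -t := by
    rw [← hGz]
    exact hmono ⟨le_refl _, by linarith⟩ hzmemI (by linarith)
  have hy2 : -t < Gst ρ (z + ε) := by
    rw [← hGz]
    exact hmono hzmemI ⟨by linarith, le_refl _⟩ (by linarith)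
  set N : Set ℝ := Ioo (Gst ρ (z - ε)) (Gst ρ (z + ε)) with hN
  have hNnhds : N ∈ nhds (-t) := isOpen_Ioo.mem_nhds ⟨hy1, hy2⟩
  have hsurj : ∀ y ∈ N, Ginv ρ y ∈ I ∧ Gst ρ (Ginv ρ y) = y := by
    intro y hy
    have h1 : y ∈ Icc (Gst ρ (z - ε)) (Gst ρ (z + ε)) := ⟨hy.1.le, hy.2.le⟩
    obtain ⟨x, hxI, hx⟩ := intermediate_value_Icc (by linarith : z - ε ≤ z + ε) hcontI h1
    have h2 : Ginv ρ y = x := by rw [← hx, hleft x (hIS hxI)]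
    exact ⟨h2 ▸ hxI, by rw [h2, hx]⟩
  have hGinvt : Ginv ρ (-t) = z := by rw [← hGz, hleft z hzS]
  -- strict monotonicity of Ginv on N
  have hmonoInv : StrictMonoOn (Ginv ρ) N := by
    intro y1 hy1' y2 hy2' h12
    obtain ⟨hI1, hG1⟩ := hsurj y1 hy1'
    obtain ⟨hI2, hG2⟩ := hsurj y2 hy2'
    have : Gst ρ (Ginv ρ y1) < Gst ρ (Ginv ρ y2) := by rw [hG1, hG2]; exact h12
    exact (hmono.lt_iff_lt hI1 hI2).1 this
  -- image of N is a nbhd of z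
  have himg : Ginv ρ '' N ∈ nhds (Ginv ρ (-t)) := by
    rw [hGinvt]
    apply mem_of_superset (isOpen_Ioo.mem_nhds (⟨by linarith, by linarith⟩ :
      z ∈ Ioo (z - ε) (z + ε)))
    intro x hx
    have hxI : x ∈ I := ⟨hx.1.le, hx.2.le⟩
    have hGx : Gst ρ x ∈ N :=
      ⟨hmono ⟨le_refl _, by linarith⟩ hxI hx.1, hmono hxI ⟨by linarith, le_refl _⟩ hx.2⟩
    exact ⟨Gst ρ x, hGx, hleft x (hIS hxI)⟩
  have hcont : ContinuousAt (Ginv ρ) (-t) :=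
    hmonoInv.continuousAt_of_image_mem_nhds hNnhds himg
  -- derivative data
  set f' : ℝ := ∫ l, ((l - z)^2)⁻¹ ∂ρ with hf'
  have hzIcc : z ∉ Icc a b := hSnotin z hzS
  have hfd : HasDerivAt (Gst ρ) f' z := (hasDerivAt_Gst ρ hae hzIcc).1
  have hsq : (Gst ρ z)^2 < f' := sq_Gst_lt ρ hae hzIcc hnd
  have hf'pos : 0 < f' := lt_of_le_of_lt (sq_nonneg _) hsq
  have hfd' : HasDerivAt (Gst ρ) f' (Ginv ρ (-t)) := hGinvt ▸ hfd
  have hGinvDeriv : HasDerivAt (Ginv ρ) f'⁻¹ (-t) := by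
    apply HasDerivAt.of_local_left_inverse hcont hfd' (ne_of_gt hf'pos)
    filter_upwards [hNnhds] with y hy using (hsurj y hy).2
  have hcomp : HasDerivAt (fun u : ℝ => Ginv ρ (-u)) (f'⁻¹ * (-1)) t := by
    exact hGinvDeriv.comp t (by simpa using (hasDerivAt_neg t))
  have hinvt : HasDerivAt (fun u : ℝ => u⁻¹) (-(t^2)⁻¹) t := hasDerivAt_inv htne
  have hR : HasDerivAt (Rhat ρ) (f'⁻¹ * (-1) - -(t^2)⁻¹) t := by
    have h4 : Rhat ρ = fun u => Ginv ρ (-u) - u⁻¹ := rfl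
    rw [h4]
    exact hcomp.sub hinvt
  have hval : f'⁻¹ * (-1) - -(t^2)⁻¹ = (t^2)⁻¹ - f'⁻¹ := by ring
  have ht2 : (Gst ρ z)^2 = t^2 := by rw [hGz]; ring
  have ht2pos : (0:ℝ) < t^2 := by positivity
  have hlt : t^2 < f' := ht2 ▸ hsq
  have hinvlt : f'⁻¹ < (t^2)⁻¹ := by
    rw [inv_eq_one_div, inv_eq_one_div]
    exact one_div_lt_one_div_of_lt ht2pos hlt
  refine ⟨hR.differentiableAt, ?_⟩
  rw [hR.deriv, hval]
  linarith
end

section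
/- Let ρ be a nondegenerate (not a point mass) probability measure on ℝ whose support is bounded below, with a_ρ := inf(supp ρ) ∈ ℝ. Then there is no pair (I, f) where I ⊆ ℝ is an open interval containing a_ρ and f : I → ℝ is real analytic on I with f(z) = G_ρ(z) for all z ∈ I with z < a_ρ. In other words, the restriction of the Stieltjes transform G_ρ to (−∞, a_ρ) admits no real analytic continuation to any open interval containing a_ρ. -/
open MeasureTheory Filter Set

/-- the Stieltjes transform of a nondegenerate measure whose support is
bounded below admits no real analytic continuation past the left edge of the support. -/
theorem statement12 (ρ : MeasureTheory.Measure ℝ) [MeasureTheory.IsProbabilityMeasure ρ]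
    (hnd : Nondeg ρ) (hbb : BddBelow (msupp ρ)) (hne : (msupp ρ).Nonempty) :
    ¬ ∃ (I : Set ℝ) (f : ℝ → ℝ), IsOpen I ∧ I.OrdConnected ∧ aInf ρ ∈ I ∧
      AnalyticOnNhd ℝ f I ∧ ∀ z ∈ I, z < aInf ρ → f z = Gst ρ z := by
  rintro ⟨I, f, hIopen, -, haI, hfan, hagree⟩
  set a := aInf ρ with ha_def
  -- the support is closed
  have hclosed : IsClosed (msupp ρ) := by
    rw [← isOpen_compl_iff, isOpen_iff_mem_nhds]
    intro x hx
    simp only [msupp, mem_compl_iff, mem_setOf_eq, not_forall, not_ne_iff] at hx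
    obtain ⟨U, hU, hU0⟩ := hx
    obtain ⟨V, hVU, hVopen, hxV⟩ := mem_nhds_iff.1 hU
    refine Filter.mem_of_superset (hVopen.mem_nhds hxV) fun y hy => ?_
    simp only [msupp, mem_compl_iff, mem_setOf_eq, not_forall, not_ne_iff]
    exact ⟨V, hVopen.mem_nhds hy, measure_mono_null hVU hU0⟩
  have hamem : a ∈ msupp ρ := hclosed.csInf_mem hne hbb
  -- the complement of the support is null
  have hcompl : ρ (msupp ρ)ᶜ = 0 := by
    apply measure_null_of_locally_null
    intro x hx
    simp only [msupp, mem_compl_iff, mem_setOf_eq, not_forall, not_ne_iff] at hx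
    obtain ⟨U, hU, hU0⟩ := hx
    exact ⟨U, mem_nhdsWithin_of_mem_nhds hU, hU0⟩
  have hiio : ρ (Iio a) = 0 := by
    refine measure_mono_null ?_ hcompl
    intro x hx
    simp only [mem_compl_iff, msupp, mem_setOf_eq]
    intro hmem
    exact absurd (csInf_le hbb hmem) (not_le.2 hx)
  have hae : ∀ᵐ l ∂ρ, a ≤ l := by
    rw [ae_iff]
    simp only [not_le]
    exact hiio
  -- the family of integrals
  set Gn : ℕ → ℝ → ℝ := fun n z => ∫ l, ((l - z)⁻¹) ^ (n + 1) ∂ρ with hGn_def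
  have hmeas : ∀ (m : ℕ) (z : ℝ), AEStronglyMeasurable (fun l : ℝ => ((l - z)⁻¹) ^ m) ρ :=
    fun m z => (((measurable_id.sub_const z).inv).pow_const m).aestronglyMeasurable
  have hint : ∀ (m : ℕ) (z : ℝ), z < a → Integrable (fun l => ((l - z)⁻¹) ^ m) ρ := by
    intro m z hz
    refine Integrable.mono' (integrable_const (((a - z)⁻¹) ^ m)) (hmeas m z) ?_
    filter_upwards [hae] with l hl
    have h1 : 0 < a - z := sub_pos.2 hz
    have h2 : 0 < l - z := by linarith
    rw [Real.norm_eq_abs, abs_of_nonneg (by positivity)]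
    refine pow_le_pow_left₀ (by positivity) ?_ m
    have h3 : a - z ≤ l - z := by linarith
    gcongr
  -- derivative formula
  have hderiv : ∀ (n : ℕ) (z : ℝ), z < a →
      HasDerivAt (Gn n) (((n : ℝ) + 1) * Gn (n + 1) z) z := by
    intro n z hz
    set ε := (a - z) / 2 with hε_def
    have hε0 : 0 < ε := by rw [hε_def]; linarith
    have key := hasDerivAt_integral_of_dominated_loc_of_deriv_le (μ := ρ)
      (F := fun x l => ((l - x)⁻¹) ^ (n + 1))
      (F' := fun x l => ((n : ℝ) + 1) * ((l - x)⁻¹) ^ (n + 2))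
      (bound := fun _ => ((n : ℝ) + 1) * (ε⁻¹) ^ (n + 2))
      (Metric.ball_mem_nhds z hε0) (Eventually.of_forall fun x => hmeas (n + 1) x) (hint (n + 1) z hz)
      ((hmeas (n + 2) z).const_mul _) ?_ (integrable_const _) ?_
    · have h2 : ((n : ℝ) + 1) * Gn (n + 1) z
          = ∫ l, ((n : ℝ) + 1) * ((l - z)⁻¹) ^ (n + 2) ∂ρ := by
        simp only [hGn_def]
        rw [show n + 1 + 1 = n + 2 from rfl, integral_const_mul]
      rw [h2]
      exact key.2
    · filter_upwards [hae] with l hl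
      intro x hx
      rw [Metric.mem_ball, Real.dist_eq] at hx
      have hx1 : x < z + ε := by
        rcases abs_lt.1 hx with ⟨h1, h2⟩; linarith
      have hlx : ε ≤ l - x := by
        rw [hε_def] at hx1 ⊢; linarith
      have h2 : 0 < l - x := lt_of_lt_of_le hε0 hlx
      rw [Real.norm_eq_abs, abs_of_nonneg (by positivity)]
      have hinv : (l - x)⁻¹ ≤ ε⁻¹ := by gcongr
      exact mul_le_mul_of_nonneg_left (pow_le_pow_left₀ (by positivity) hinv _)
        (by positivity)
    · filter_upwards [hae] with l hl
      intro x hx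
      rw [Metric.mem_ball, Real.dist_eq] at hx
      have hx1 : x < z + ε := by
        rcases abs_lt.1 hx with ⟨h1, h2⟩; linarith
      have h2 : 0 < l - x := by rw [hε_def] at hx1; linarith
      have hne' : l - x ≠ 0 := ne_of_gt h2
      have d1 : HasDerivAt (fun x : ℝ => l - x) (-1) x := by
        simpa using (hasDerivAt_id x).const_sub l
      have d3 := (d1.inv hne').pow (n + 1)
      refine d3.congr_deriv ?_
      push_cast [Nat.add_sub_cancel]
      rw [neg_neg, one_div, ← inv_pow]
      simp only [Pi.inv_apply]
      ring
  -- a small interval to the left of a inside I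
  obtain ⟨δ, hδ0, hδI⟩ : ∃ δ > 0, Ioo (a - δ) (a + δ) ⊆ I := by
    obtain ⟨δ, hδ0, hball⟩ := Metric.isOpen_iff.1 hIopen a haI
    exact ⟨δ, hδ0, by rwa [Real.ball_eq_Ioo] at hball⟩
  set J := Ioo (a - δ) a with hJ_def
  have hJopen : IsOpen J := isOpen_Ioo
  have hJI : J ⊆ I := fun z hz => hδI ⟨hz.1, lt_trans hz.2 (by linarith)⟩
  have hJG : ∀ z ∈ J, f z = Gn 0 z := by
    intro z hz
    rw [hagree z (hJI hz) hz.2]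
    simp [hGn_def, Gst]
  -- iterated derivatives of f on J
  have hkey : ∀ n, ∀ z ∈ J, iteratedDeriv n f z = (n.factorial : ℝ) * Gn n z := by
    intro n
    induction n with
    | zero =>
      intro z hz
      simpa [iteratedDeriv_zero] using hJG z hz
    | succ n ih =>
      intro z hz
      rw [iteratedDeriv_succ]
      have heq : iteratedDeriv n f =ᶠ[nhds z] fun w => (n.factorial : ℝ) * Gn n w :=
        eventually_of_mem (hJopen.mem_nhds hz) ih
      rw [heq.deriv_eq, ((hderiv n z hz.2).const_mul (n.factorial : ℝ)).deriv,
        Nat.factorial_succ]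
      push_cast
      ring
  -- iterated derivatives of f are analytic, hence continuous, on I
  have han : ∀ n, AnalyticOnNhd ℝ (iteratedDeriv n f) I := by
    intro n
    induction n with
    | zero => simpa [iteratedDeriv_zero] using hfan
    | succ n ih => rw [iteratedDeriv_succ]; exact ih.deriv
  -- power series of f at a
  obtain ⟨p, hp⟩ := hfan a haI
  obtain ⟨r, hpr⟩ := hp
  obtain ⟨r'', hr''0, hr''lt⟩ :=
    ENNReal.lt_iff_exists_nnreal_btwn.1 (lt_of_lt_of_le hpr.r_pos hpr.r_le)
  have hr''pos : (0 : ℝ) < (r'' : ℝ) := by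
    have : (0 : NNReal) < r'' := by exact_mod_cast hr''0
    exact_mod_cast this
  set r' : ℝ := (r'' : ℝ) / 2 with hr'_def
  have hr'0 : 0 < r' := by rw [hr'_def]; linarith
  set m' : ℝ := (ρ (Icc a (a + r'))).toReal with hm'_def
  have hm'0 : 0 ≤ m' := ENNReal.toReal_nonneg
  -- lower bound for Gn on J
  have hlow : ∀ n, ∀ z ∈ J, ((a + r' - z)⁻¹) ^ (n + 1) * m' ≤ Gn n z := by
    intro n z hz
    have hz2 : z < a := hz.2
    have h1 : ∫ l in Icc a (a + r'), ((l - z)⁻¹) ^ (n + 1) ∂ρ ≤ Gn n z := by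
      apply setIntegral_le_integral (hint (n + 1) z hz2)
      filter_upwards [hae] with l hl
      have h2 : 0 < l - z := by linarith
      positivity
    refine le_trans ?_ h1
    rw [hm'_def]
    apply setIntegral_ge_of_const_le_real measurableSet_Icc (measure_ne_top ρ _) ?_
      ((hint (n + 1) z hz2).integrableOn)
    intro l hl
    have h2 : 0 < l - z := by have := hl.1; linarith
    have h3 : l - z ≤ a + r' - z := by have := hl.2; linarith
    have h4 : 0 < a + r' - z := lt_of_lt_of_le h2 h3
    refine pow_le_pow_left₀ (by positivity) ?_ _
    gcongr
  -- limit as z → a⁻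
  have hlim : ∀ n : ℕ, (n.factorial : ℝ) * (((r')⁻¹) ^ (n + 1) * m') ≤ iteratedDeriv n f a := by
    intro n
    have hL : Tendsto (iteratedDeriv n f) (nhdsWithin a (Iio a))
        (nhds (iteratedDeriv n f a)) :=
      ((han n a haI).continuousAt.tendsto).mono_left nhdsWithin_le_nhds
    have h0 : a + r' - a ≠ 0 := by
      intro h; apply ne_of_gt hr'0; linarith
    have hc : ContinuousAt
        (fun z : ℝ => (n.factorial : ℝ) * (((a + r' - z)⁻¹) ^ (n + 1) * m')) a := by
      exact (((((continuousAt_const.sub continuousAt_id).inv₀ h0).pow _).mul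
        continuousAt_const).const_mul _)
    have hR := hc.tendsto.mono_left (nhdsWithin_le_nhds (s := Iio a))
    have harr : a + r' - a = r' := by ring
    rw [harr] at hR
    refine le_of_tendsto_of_tendsto hR hL ?_
    filter_upwards [Ioo_mem_nhdsLT_of_mem
      (show a ∈ Ioc (a - δ) a from ⟨by linarith, le_refl a⟩)] with z hz
    rw [hkey n z hz]
    exact mul_le_mul_of_nonneg_left (hlow n z hz) (by positivity)
  -- coefficient bound
  have hcoef : ∀ n : ℕ, ((r')⁻¹) ^ (n + 1) * m' ≤ ‖p n‖ := by
    intro n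
    have h1 := hlim n
    have h2 : (n.factorial : ℝ) * (p n fun _ => (1 : ℝ)) = iteratedDeriv n f a := by
      rw [iteratedDeriv_eq_iteratedFDeriv, ← hpr.factorial_smul (1 : ℝ) n,
        nsmul_eq_mul]
    rw [← h2] at h1
    have hfpos : (0 : ℝ) < (n.factorial : ℝ) := by exact_mod_cast n.factorial_pos
    have h3 : ((r')⁻¹) ^ (n + 1) * m' ≤ (p n fun _ => (1 : ℝ)) :=
      le_of_mul_le_mul_left h1 hfpos
    refine h3.trans ?_
    calc (p n fun _ => (1 : ℝ)) ≤ ‖(p n fun _ => (1 : ℝ))‖ := le_abs_self _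
      _ ≤ ‖p n‖ * ∏ _i : Fin n, ‖(1 : ℝ)‖ := (p n).le_opNorm _
      _ = ‖p n‖ := by simp
  have hsum := p.summable_norm_mul_pow hr''lt
  have htend := hsum.tendsto_atTop_zero
  have hterm : ∀ n : ℕ, m' * (r')⁻¹ ≤ ‖p n‖ * (r'' : ℝ) ^ n := by
    intro n
    have h2 : (r'' : ℝ) = 2 * r' := by rw [hr'_def]; ring
    have hone : (1 : ℝ) ≤ 2 ^ n := one_le_pow₀ (by norm_num)
    have hr'ne : r' ≠ 0 := ne_of_gt hr'0
    have hpow : ((r')⁻¹) ^ (n + 1) * (2 * r') ^ n = 2 ^ n * (r')⁻¹ := by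
      have heq2 : ((r')⁻¹) ^ (n + 1) * (2 * r') ^ n
          = 2 ^ n * (((r')⁻¹ * r') ^ n * (r')⁻¹) := by
        rw [mul_pow, pow_succ, mul_pow]; ring
      rw [heq2, inv_mul_cancel₀ hr'ne, one_pow, one_mul]
    calc m' * (r')⁻¹ ≤ (m' * (r')⁻¹) * 2 ^ n :=
          le_mul_of_one_le_right (by positivity) hone
      _ = (((r')⁻¹) ^ (n + 1) * m') * (2 * r') ^ n := by
          rw [show (((r')⁻¹) ^ (n + 1) * m') * (2 * r') ^ n
            = (((r')⁻¹) ^ (n + 1) * (2 * r') ^ n) * m' from by ring, hpow]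
          ring
      _ ≤ ‖p n‖ * (r'' : ℝ) ^ n := by
          rw [h2]
          exact mul_le_mul_of_nonneg_right (hcoef n) (by positivity)
  have hm'le : m' * (r')⁻¹ ≤ 0 := ge_of_tendsto' htend hterm
  have hm'eq : m' = 0 := by
    have hrpos : 0 < (r')⁻¹ := inv_pos.2 hr'0
    nlinarith
  have hIcc : ρ (Icc a (a + r')) = 0 := by
    rw [hm'_def] at hm'eq
    rcases (ENNReal.toReal_eq_zero_iff _).1 hm'eq with h | h
    · exact h
    · exact absurd h (measure_ne_top ρ _)
  have hU : Ioo (a - 1) (a + r') ∈ nhds a := Ioo_mem_nhds (by linarith) (by linarith)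
  refine hamem _ hU ?_
  have hsub : Ioo (a - 1) (a + r') ⊆ Iio a ∪ Icc a (a + r') := by
    intro x hx
    rcases lt_or_ge x a with h | h
    · exact Or.inl h
    · exact Or.inr ⟨h, le_of_lt hx.2⟩
  exact measure_mono_null hsub (measure_union_null hiio hIcc)
end

section
/- Let β > 0 and let ν be a compactly supported probability measure on ℝ with a_ν := inf(supp ν). Then the function h ↦ h + β/(1 + G_ν(h)) is strictly concave on the interval (−∞, a_ν). (Note that G_ν(h) > 0 for h < a_ν, so 1 + G_ν(h) > 0 there.) -/
open MeasureTheory Filter Set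

section Statement16Aux

open MeasureTheory Filter Set

lemma st16_null_compl (ν : MeasureTheory.Measure ℝ) [MeasureTheory.IsProbabilityMeasure ν] :
    ν (msupp ν)ᶜ = 0 := by
  apply MeasureTheory.measure_null_of_locally_null
  intro x hx
  simp only [msupp, mem_compl_iff, mem_setOf_eq] at hx
  push_neg at hx
  obtain ⟨U, hU, hU0⟩ := hx
  exact ⟨(msupp ν)ᶜ ∩ U, inter_mem_nhdsWithin _ hU,
    measure_mono_null inter_subset_right hU0⟩

lemma st16_ae_msupp (ν : MeasureTheory.Measure ℝ) [MeasureTheory.IsProbabilityMeasure ν] :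
    ∀ᵐ l ∂ν, l ∈ msupp ν := by
  rw [MeasureTheory.ae_iff]
  exact st16_null_compl ν

/-- Cauchy–Schwarz: `(∫ c²)² ≤ (∫ c)(∫ c³)` for a.e. bounded positive `c`. -/
lemma st16_cauchy (μ : MeasureTheory.Measure ℝ) [MeasureTheory.IsProbabilityMeasure μ]
    (c : ℝ → ℝ) (hm : Measurable c) (d D : ℝ) (hd : 0 < d)
    (hb : ∀ᵐ l ∂μ, d ≤ c l ∧ c l ≤ D) :
    (∫ l, (c l) ^ 2 ∂μ) ^ 2 ≤ (∫ l, c l ∂μ) * (∫ l, (c l) ^ 3 ∂μ) := by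
  set f : ℝ → ℝ := fun l => Real.sqrt (c l) with hf
  set g : ℝ → ℝ := fun l => Real.sqrt ((c l) ^ 3) with hg
  have hfm : AEStronglyMeasurable f μ :=
    (Real.continuous_sqrt.measurable.comp hm).aestronglyMeasurable
  have hgm : AEStronglyMeasurable g μ :=
    (Real.continuous_sqrt.measurable.comp (hm.pow_const 3)).aestronglyMeasurable
  have hDd : d ≤ D := by
    rcases hb.exists with ⟨l, h1, h2⟩
    linarith
  have hD : 0 < D := lt_of_lt_of_le hd hDd
  have hfb : MemLp f (ENNReal.ofReal 2) μ := by
    apply MeasureTheory.MemLp.of_bound hfm (Real.sqrt D)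
    filter_upwards [hb] with l hl
    rw [Real.norm_eq_abs, abs_of_nonneg (Real.sqrt_nonneg _)]
    exact Real.sqrt_le_sqrt hl.2
  have hgb : MemLp g (ENNReal.ofReal 2) μ := by
    apply MeasureTheory.MemLp.of_bound hgm (Real.sqrt (D ^ 3))
    filter_upwards [hb] with l hl
    rw [Real.norm_eq_abs, abs_of_nonneg (Real.sqrt_nonneg _)]
    apply Real.sqrt_le_sqrt
    exact pow_le_pow_left₀ (le_of_lt (lt_of_lt_of_le hd hl.1)) hl.2 3
  have hconj : Real.HolderConjugate 2 2 := Real.HolderConjugate.two_two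
  have key := MeasureTheory.integral_mul_le_Lp_mul_Lq_of_nonneg hconj
    (Filter.Eventually.of_forall (fun l => Real.sqrt_nonneg _))
    (Filter.Eventually.of_forall (fun l => Real.sqrt_nonneg _)) hfb hgb
  have h1 : ∫ l, f l * g l ∂μ = ∫ l, (c l) ^ 2 ∂μ := by
    apply MeasureTheory.integral_congr_ae
    filter_upwards [hb] with l hl
    have hc0 : (0:ℝ) ≤ c l := le_of_lt (lt_of_lt_of_le hd hl.1)
    have : c l * (c l) ^ 3 = ((c l) ^ 2) ^ 2 := by ring
    rw [hf, hg]
    simp only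
    rw [← Real.sqrt_mul hc0, this, Real.sqrt_sq (sq_nonneg _)]
  have h2 : ∫ l, f l ^ (2:ℝ) ∂μ = ∫ l, c l ∂μ := by
    apply MeasureTheory.integral_congr_ae
    filter_upwards [hb] with l hl
    have hc0 : (0:ℝ) ≤ c l := le_of_lt (lt_of_lt_of_le hd hl.1)
    rw [hf]
    simp only
    rw [Real.rpow_two, Real.sq_sqrt hc0]
  have h3 : ∫ l, g l ^ (2:ℝ) ∂μ = ∫ l, (c l) ^ 3 ∂μ := by
    apply MeasureTheory.integral_congr_ae
    filter_upwards [hb] with l hl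
    have hc0 : (0:ℝ) ≤ (c l) ^ 3 :=
      pow_nonneg (le_of_lt (lt_of_lt_of_le hd hl.1)) 3
    rw [hg]
    simp only
    rw [Real.rpow_two, Real.sq_sqrt hc0]
  rw [h1, h2, h3] at key
  have hA : (0:ℝ) ≤ ∫ l, c l ∂μ := by
    apply MeasureTheory.integral_nonneg_of_ae
    filter_upwards [hb] with l hl
    exact le_trans hd.le hl.1
  have hB : (0:ℝ) ≤ ∫ l, (c l) ^ 3 ∂μ := by
    apply MeasureTheory.integral_nonneg_of_ae
    filter_upwards [hb] with l hl
    exact pow_nonneg (by linarith [hl.1]) 3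
  have hC : (0:ℝ) ≤ ∫ l, (c l) ^ 2 ∂μ := by
    apply MeasureTheory.integral_nonneg_of_ae
    filter_upwards [hb] with l hl
    exact sq_nonneg _
  calc (∫ l, (c l) ^ 2 ∂μ) ^ 2
      ≤ ((∫ l, c l ∂μ) ^ ((1:ℝ)/2) * (∫ l, (c l) ^ 3 ∂μ) ^ ((1:ℝ)/2)) ^ 2 :=
        pow_le_pow_left₀ hC (by simpa using key) 2
    _ = (∫ l, c l ∂μ) * (∫ l, (c l) ^ 3 ∂μ) := by
        rw [mul_pow, ← Real.rpow_natCast ((∫ l, c l ∂μ) ^ ((1:ℝ)/2)) 2,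
          ← Real.rpow_natCast ((∫ l, (c l) ^ 3 ∂μ) ^ ((1:ℝ)/2)) 2,
          ← Real.rpow_mul hA, ← Real.rpow_mul hB]
        norm_num

end Statement16Aux

/-- strict concavity of `h ↦ h + β / (1 + G_ν(h))` on `(-∞, a_ν)`
(the function `F` for the Marchenko–Pastur law). -/
theorem statement16 (β : ℝ) (hβ : 0 < β) (ν : MeasureTheory.Measure ℝ)
    [MeasureTheory.IsProbabilityMeasure ν] (hc : HasCompactSupp ν) :
    StrictConcaveOn ℝ (Set.Iio (aInf ν)) (fun h : ℝ => h + β / (1 + Gst ν h)) := by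
  classical
  obtain ⟨K, hKc, hK1⟩ := hc
  have hKm : MeasurableSet K := hKc.isClosed.measurableSet
  have hKcompl : ν Kᶜ = 0 := by
    rw [MeasureTheory.measure_compl hKm (MeasureTheory.measure_ne_top ν K), hK1]
    simp
  have hsub : msupp ν ⊆ K := by
    intro x hx
    by_contra hxK
    exact hx Kᶜ (hKc.isClosed.isOpen_compl.mem_nhds hxK) hKcompl
  have hne : (msupp ν).Nonempty := by
    rw [Set.nonempty_iff_ne_empty]
    intro h
    have h0 := st16_null_compl ν
    rw [h, Set.compl_empty] at h0
    simp [MeasureTheory.measure_univ] at h0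
  have hbdd : BddBelow (msupp ν) := hKc.bddBelow.mono hsub
  set a := aInf ν with ha
  set M := sSup K with hM
  have hmem_le : ∀ x ∈ msupp ν, a ≤ x ∧ x ≤ M := fun x hx =>
    ⟨csInf_le hbdd hx, le_csSup hKc.bddAbove (hsub hx)⟩
  have haM : a ≤ M := le_trans (hmem_le _ hne.some_mem).1 (hmem_le _ hne.some_mem).2
  have hae : ∀ᵐ l ∂ν, a ≤ l ∧ l ≤ M := (st16_ae_msupp ν).mono fun l hl => hmem_le l hl
  -- basic integrands
  set g2 : ℝ → ℝ := fun h => ∫ l, ((l - h)⁻¹) ^ 2 ∂ν with hg2def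
  set g3 : ℝ → ℝ := fun h => ∫ l, ((l - h)⁻¹) ^ 3 ∂ν with hg3def
  have meas : ∀ (h : ℝ) (n : ℕ),
      MeasureTheory.AEStronglyMeasurable (fun l : ℝ => ((l - h)⁻¹) ^ n) ν :=
    fun h n => (((measurable_id.sub_const h).inv).pow_const n).aestronglyMeasurable
  have intn : ∀ h : ℝ, h < a → ∀ n : ℕ,
      MeasureTheory.Integrable (fun l : ℝ => ((l - h)⁻¹) ^ n) ν := by
    intro h hh n
    apply MeasureTheory.Integrable.mono'
      (MeasureTheory.integrable_const (((a - h)⁻¹) ^ n)) (meas h n)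
    filter_upwards [hae] with l hl
    have h0 : (0:ℝ) < a - h := sub_pos.2 hh
    have h1 : (0:ℝ) < l - h := lt_of_lt_of_le h0 (by linarith [hl.1])
    rw [Real.norm_eq_abs, abs_pow, abs_inv, abs_of_pos h1]
    exact pow_le_pow_left₀ (inv_nonneg.2 h1.le)
      (inv_anti₀ h0 (by linarith [hl.1])) n
  have posn : ∀ h : ℝ, h < a → ∀ n : ℕ,
      ((M - h)⁻¹) ^ n ≤ ∫ l, ((l - h)⁻¹) ^ n ∂ν := by
    intro h hh n
    have hMh : (0:ℝ) < M - h := by linarith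
    have := MeasureTheory.integral_mono_ae
      (MeasureTheory.integrable_const (((M - h)⁻¹) ^ n)) (intn h hh n) ?_
    · simpa [MeasureTheory.integral_const, MeasureTheory.measure_univ] using this
    · filter_upwards [hae] with l hl
      have h1 : (0:ℝ) < l - h := by linarith [hl.1]
      exact pow_le_pow_left₀ (inv_nonneg.2 hMh.le)
        (inv_anti₀ h1 (by linarith [hl.2])) n
  have hGpos : ∀ h : ℝ, h < a → 0 < Gst ν h := by
    intro h hh
    have hMh : (0:ℝ) < M - h := by linarith
    have h1 := posn h hh 1
    have : Gst ν h = ∫ l, ((l - h)⁻¹) ^ 1 ∂ν := by simp [Gst]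
    rw [this]
    calc (0:ℝ) < ((M - h)⁻¹) ^ 1 := by positivity
      _ ≤ _ := h1
  have hg2pos : ∀ h : ℝ, h < a → 0 < g2 h := by
    intro h hh
    have hMh : (0:ℝ) < M - h := by linarith
    calc (0:ℝ) < ((M - h)⁻¹) ^ 2 := by positivity
      _ ≤ g2 h := posn h hh 2
  have hg3pos : ∀ h : ℝ, h < a → 0 < g3 h := by
    intro h hh
    have hMh : (0:ℝ) < M - h := by linarith
    calc (0:ℝ) < ((M - h)⁻¹) ^ 3 := by positivity
      _ ≤ g3 h := posn h hh 3
  -- the pointwise derivative facts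
  have hptderiv : ∀ (l t : ℝ), l - t ≠ 0 →
      HasDerivAt (fun t : ℝ => (l - t)⁻¹) (((l - t)⁻¹) ^ 2) t := by
    intro l t hne0
    have h1 : HasDerivAt (fun t : ℝ => l - t) (-1) t := by
      exact (hasDerivAt_id' t).const_sub l
    have h2 := h1.inv hne0
    refine h2.congr_deriv ?_
    rw [inv_pow, neg_neg, one_div]
  -- derivative of Gst
  have hasDeriv1 : ∀ x : ℝ, x < a → HasDerivAt (Gst ν) (g2 x) x := by
    intro x hx
    set ε : ℝ := (a - x) / 2 with hε
    have hε0 : 0 < ε := by simp [hε]; linarith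
    have key := hasDerivAt_integral_of_dominated_loc_of_deriv_le
      (F := fun t l => (l - t)⁻¹) (F' := fun t l => ((l - t)⁻¹) ^ 2)
      (bound := fun _ => (ε⁻¹) ^ 2) (μ := ν) (x₀ := x) (Metric.ball_mem_nhds x hε0)
      (Filter.Eventually.of_forall fun t => by
        simpa using meas t 1)
      (by simpa using intn x hx 1)
      (meas x 2)
      ?_ (MeasureTheory.integrable_const _) ?_
    · exact key.2
    · filter_upwards [hae] with l hl
      intro t ht
      rw [Metric.mem_ball, Real.dist_eq] at ht
      have hlt : ε ≤ l - t := by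
        have := abs_lt.1 ht
        simp only [hε] at *
        linarith [hl.1, this.1, this.2]
      have h1 : (0:ℝ) < l - t := lt_of_lt_of_le hε0 hlt
      rw [Real.norm_eq_abs, abs_pow, abs_inv, abs_of_pos h1]
      exact pow_le_pow_left₀ (inv_nonneg.2 h1.le) (inv_anti₀ hε0 hlt) 2
    · filter_upwards [hae] with l hl
      intro t ht
      rw [Metric.mem_ball, Real.dist_eq] at ht
      have hlt : (0:ℝ) < l - t := by
        have := abs_lt.1 ht
        simp only [hε] at *
        linarith [hl.1, this.1, this.2]
      exact hptderiv l t (ne_of_gt hlt)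
  -- derivative of g2
  have hasDeriv2 : ∀ x : ℝ, x < a → HasDerivAt g2 (2 * g3 x) x := by
    intro x hx
    set ε : ℝ := (a - x) / 2 with hε
    have hε0 : 0 < ε := by simp [hε]; linarith
    have key := hasDerivAt_integral_of_dominated_loc_of_deriv_le
      (F := fun t l => ((l - t)⁻¹) ^ 2) (F' := fun t l => 2 * ((l - t)⁻¹) ^ 3)
      (bound := fun _ => 2 * (ε⁻¹) ^ 3) (μ := ν) (x₀ := x) (Metric.ball_mem_nhds x hε0)
      (Filter.Eventually.of_forall fun t => meas t 2)
      (intn x hx 2)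
      ((meas x 3).const_mul 2)
      ?_ (MeasureTheory.integrable_const _) ?_
    · have h2 := key.2
      have : (∫ l, 2 * ((l - x)⁻¹) ^ 3 ∂ν) = 2 * g3 x := by
        rw [hg3def]
        exact MeasureTheory.integral_const_mul 2 _
      rwa [this] at h2
    · filter_upwards [hae] with l hl
      intro t ht
      rw [Metric.mem_ball, Real.dist_eq] at ht
      have hlt : ε ≤ l - t := by
        have := abs_lt.1 ht
        simp only [hε] at *
        linarith [hl.1, this.1, this.2]
      have h1 : (0:ℝ) < l - t := lt_of_lt_of_le hε0 hlt
      rw [Real.norm_eq_abs, abs_mul, abs_pow, abs_inv, abs_of_pos h1]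
      have : |(2:ℝ)| = 2 := by norm_num
      rw [this]
      have hp := pow_le_pow_left₀ (inv_nonneg.2 h1.le) (inv_anti₀ hε0 hlt) 3
      linarith
    · filter_upwards [hae] with l hl
      intro t ht
      rw [Metric.mem_ball, Real.dist_eq] at ht
      have hlt : (0:ℝ) < l - t := by
        have := abs_lt.1 ht
        simp only [hε] at *
        linarith [hl.1, this.1, this.2]
      have hd := (hptderiv l t (ne_of_gt hlt)).pow 2
      refine hd.congr_deriv ?_
      rw [show (2:ℕ) - 1 = 1 from rfl]
      push_cast
      ring
  -- Cauchy-Schwarz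
  have hCS : ∀ x : ℝ, x < a → (g2 x) ^ 2 ≤ Gst ν x * g3 x := by
    intro x hx
    have hMx : (0:ℝ) < M - x := by linarith
    have := st16_cauchy ν (fun l => (l - x)⁻¹)
      ((measurable_id.sub_const x).inv) ((M - x)⁻¹) ((a - x)⁻¹)
      (by positivity) ?_
    · have hG : Gst ν x = ∫ l, (l - x)⁻¹ ∂ν := rfl
      rw [hg2def, hg3def, hG]
      exact this
    · filter_upwards [hae] with l hl
      have h0 : (0:ℝ) < a - x := by linarith
      have h1 : (0:ℝ) < l - x := by linarith [hl.1]
      exact ⟨inv_anti₀ h1 (by linarith [hl.2]),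
        inv_anti₀ h0 (by linarith [hl.1])⟩
  -- first derivative of f
  set f : ℝ → ℝ := fun h => h + β / (1 + Gst ν h) with hfdef
  set φ : ℝ → ℝ := fun x => 1 - β * g2 x / (1 + Gst ν x) ^ 2 with hφdef
  have hqpos : ∀ x : ℝ, x < a → 0 < 1 + Gst ν x := fun x hx => by
    linarith [hGpos x hx]
  have hsum : ∀ x : ℝ, x < a →
      HasDerivAt (fun h => 1 + Gst ν h) (g2 x) x := by
    intro x hx
    exact (hasDeriv1 x hx).const_add 1
  have hfd : ∀ x : ℝ, x < a → HasDerivAt f (φ x) x := by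
    intro x hx
    have hq := hqpos x hx
    have h2 := (hasDerivAt_const x β).div (hsum x hx) (ne_of_gt hq)
    have h3 := (hasDerivAt_id x).add h2
    refine h3.congr_deriv ?_
    rw [hφdef]
    simp only
    field_simp
    ring
  have hderiv_eq : ∀ x : ℝ, x < a → deriv f x = φ x := fun x hx => (hfd x hx).deriv
  -- apply concavity criterion
  apply strictConcaveOn_of_deriv2_neg (convex_Iio a)
  · intro x hx
    exact (hfd x hx).differentiableAt.continuousAt.continuousWithinAt
  · intro x hx
    rw [interior_Iio] at hx
    have hx' : x < a := hx
    have hq := hqpos x hx'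
    have hev : deriv f =ᶠ[nhds x] φ := by
      filter_upwards [Iio_mem_nhds hx'] with y hy using hderiv_eq y hy
    have hiter : deriv^[2] f x = deriv (deriv f) x := rfl
    rw [hiter, hev.deriv_eq]
    -- compute deriv φ x
    have hu := (hasDeriv2 x hx').const_mul β
    have hv := (hsum x hx').pow 2
    have hvne : ((1 + Gst ν x) ^ 2 : ℝ) ≠ 0 := by positivity
    have hdiv := hu.div hv hvne
    have hφ' := (hasDerivAt_const x (1:ℝ)).sub hdiv
    rw [show deriv φ x = _ from hφ'.deriv]
    -- show negativity
    set q : ℝ := 1 + Gst ν x with hqdef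
    have hcs := hCS x hx'
    have hg3 := hg3pos x hx'
    have hGx := hGpos x hx'
    have hN : 0 < β * (2 * g3 x) * (q ^ 2) ^ 1 -
        β * g2 x * ((2:ℕ) * q ^ (2 - 1) * g2 x) := by
      have hq2 : Gst ν x * g3 x < q * g3 x := by
        apply mul_lt_mul_of_pos_right _ hg3
        rw [hqdef]; linarith
      have hkey : (g2 x) ^ 2 < q * g3 x := lt_of_le_of_lt hcs hq2
      have : β * (2 * g3 x) * (q ^ 2) ^ 1 - β * g2 x * ((2:ℕ) * q ^ (2 - 1) * g2 x)
          = 2 * β * q * (q * g3 x - (g2 x) ^ 2) := by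
        push_cast
        ring
      rw [this]
      have h1 : 0 < q * g3 x - g2 x ^ 2 := by linarith
      have hq0 : 0 < q := hq
      have h2 : 0 < 2 * β * q := by positivity
      exact mul_pos h2 h1
    have hD : (0:ℝ) < ((q ^ 2) ^ 2) := by positivity
    have : (0:ℝ) < (β * (2 * g3 x) * (q ^ 2) ^ 1 -
        β * g2 x * ((2:ℕ) * q ^ (2 - 1) * g2 x)) / (q ^ 2) ^ 2 := div_pos hN hD
    simp only [Pi.pow_apply]
    rw [← hqdef]
    simp only [pow_one] at this ⊢
    linarith [this]
end

section
/- Let μ be a compactly supported probability measure on ℝ with a_μ := inf(supp μ) and b_μ := sup(supp μ). Then the complex Stieltjes transform G_μ(z) = ∫ (λ − z)⁻¹ dμ(λ), which is holomorphic on ℂ∖supp μ, is injective on the open set B = { z ∈ ℂ : Re z ∉ [a_μ, b_μ] }. -/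
open MeasureTheory Filter Set

section MyAux17
variable {μ : Measure ℝ}

lemma msupp_isClosed (μ : Measure ℝ) : IsClosed (msupp μ) := by
  rw [← isOpen_compl_iff, isOpen_iff_mem_nhds]
  intro x hx
  simp only [msupp, mem_compl_iff, mem_setOf_eq, not_forall, not_not] at hx
  obtain ⟨U, hU, hU0⟩ := hx
  obtain ⟨V, hVU, hVo, hxV⟩ := mem_nhds_iff.1 hU
  refine mem_of_superset (hVo.mem_nhds hxV) ?_
  intro y hy
  simp only [msupp, mem_compl_iff, mem_setOf_eq, not_forall, not_not]
  exact ⟨V, hVo.mem_nhds hy, measure_mono_null hVU hU0⟩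

lemma integrable_resolvent [IsProbabilityMeasure μ] {z : ℂ} {ε : ℝ} (hε : 0 < ε)
    (h : ∀ᵐ (l : ℝ) ∂μ, ε ≤ ‖(l : ℂ) - z‖) :
    Integrable (fun l : ℝ => ((l : ℂ) - z)⁻¹) μ := by
  refine Integrable.mono' (integrable_const ε⁻¹)
    ((Complex.measurable_ofReal.sub measurable_const).inv.aestronglyMeasurable) ?_
  filter_upwards [h] with l hl
  rw [norm_inv]
  exact inv_anti₀ hε hl

lemma measure_msupp_compl (μ : Measure ℝ) : μ (msupp μ)ᶜ = 0 := by
  obtain ⟨T, hTc, hTS, hT⟩ := TopologicalSpace.isOpen_sUnion_countable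
    {U : Set ℝ | IsOpen U ∧ μ U = 0} (fun U hU => hU.1)
  have h1 : (msupp μ)ᶜ ⊆ ⋃₀ {U : Set ℝ | IsOpen U ∧ μ U = 0} := by
    intro x hx
    simp only [msupp, mem_compl_iff, mem_setOf_eq, not_forall, not_not] at hx
    obtain ⟨U, hU, hU0⟩ := hx
    obtain ⟨V, hVU, hVo, hxV⟩ := mem_nhds_iff.1 hU
    exact ⟨V, ⟨hVo, measure_mono_null hVU hU0⟩, hxV⟩
  have h2 : μ (⋃₀ T) = 0 :=
    (measure_sUnion_null_iff hTc).2 fun U hU => (hTS hU).2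
  exact measure_mono_null (hT ▸ h1) h2

lemma ae_mem_msupp (μ : Measure ℝ) : ∀ᵐ l ∂μ, l ∈ msupp μ := by
  rw [ae_iff]
  exact measure_msupp_compl μ

lemma msupp_subset {μ : Measure ℝ} [IsProbabilityMeasure μ] {K : Set ℝ}
    (hK : IsCompact K) (hK1 : μ K = 1) : msupp μ ⊆ K := by
  intro x hx
  by_contra hxK
  have h0 : μ Kᶜ = 0 := by
    rw [measure_compl hK.isClosed.measurableSet (by simp), hK1]
    simp
  exact hx Kᶜ (hK.isClosed.isOpen_compl.mem_nhds hxK) h0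

lemma msupp_nonempty (μ : Measure ℝ) [IsProbabilityMeasure μ] : (msupp μ).Nonempty := by
  by_contra h
  rw [not_nonempty_iff_eq_empty] at h
  have := measure_msupp_compl μ
  rw [h, compl_empty, measure_univ] at this
  exact one_ne_zero this

lemma ae_mem_Icc (μ : Measure ℝ) [IsProbabilityMeasure μ] (hc : HasCompactSupp μ) :
    ∀ᵐ l ∂μ, l ∈ Icc (aInf μ) (bSup μ) := by
  obtain ⟨K, hK, hK1⟩ := hc
  have hsub := msupp_subset hK hK1
  have hbdd_b : BddBelow (msupp μ) := hK.bddBelow.mono hsub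
  have hbdd_a : BddAbove (msupp μ) := hK.bddAbove.mono hsub
  filter_upwards [ae_mem_msupp μ] with l hl
  exact ⟨csInf_le hbdd_b hl, le_csSup hbdd_a hl⟩

lemma aInf_le_bSup (μ : Measure ℝ) [IsProbabilityMeasure μ] (hc : HasCompactSupp μ) :
    aInf μ ≤ bSup μ := by
  obtain ⟨K, hK, hK1⟩ := hc
  have hsub := msupp_subset hK hK1
  obtain ⟨x, hx⟩ := msupp_nonempty μ
  exact le_trans (csInf_le (hK.bddBelow.mono hsub) hx) (le_csSup (hK.bddAbove.mono hsub) hx)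

section Key
variable {μ : Measure ℝ}

lemma inv_re_bounds {z : ℂ} {m M : ℝ} (hm : 0 < m) (h1 : m ≤ z.re)
    (h2 : ‖z‖ ≤ M) : m / M ^ 2 ≤ (z⁻¹).re ∧ ‖z⁻¹‖ ≤ m⁻¹ := by
  have hre : z.re ≤ ‖z‖ := Complex.re_le_norm z
  have hz : z ≠ 0 := by
    intro h; rw [h] at h1; simp at h1; linarith
  constructor
  · rw [Complex.inv_re]
    have hsq : Complex.normSq z ≤ M ^ 2 := by
      rw [← Complex.sq_norm]
      exact pow_le_pow_left₀ (norm_nonneg z) h2 2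
    exact div_le_div₀ (by linarith) h1 (Complex.normSq_pos.2 hz) hsq
  · rw [norm_inv]
    exact inv_anti₀ hm (by linarith)

lemma re_integral_pos [IsProbabilityMeasure μ] {f : ℝ → ℂ}
    (hf : AEStronglyMeasurable f μ) {m C : ℝ} (hm : 0 < m)
    (h : ∀ᵐ l ∂μ, m ≤ (f l).re ∧ ‖f l‖ ≤ C) : 0 < (∫ l, f l ∂μ).re := by
  have hi : Integrable f μ :=
    Integrable.mono' (integrable_const C) hf (h.mono fun l hl => hl.2)
  rw [← RCLike.re_to_complex, ← integral_re hi]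
  have hmono : ∫ _, m ∂μ ≤ ∫ l, RCLike.re (f l) ∂μ :=
    integral_mono_ae (integrable_const m) hi.re (h.mono fun l hl => by simpa using hl.1)
  simp only [integral_const, measure_univ, measureReal_def, ENNReal.toReal_one, smul_eq_mul, one_mul] at hmono
  linarith

lemma re_integral_inv_pos [IsProbabilityMeasure μ] {g : ℝ → ℂ}
    (hgm : AEStronglyMeasurable (fun l => (g l)⁻¹) μ) {m M : ℝ} (hm : 0 < m)
    (h : ∀ᵐ l ∂μ, m ≤ (g l).re ∧ ‖g l‖ ≤ M) :
    0 < (∫ l, (g l)⁻¹ ∂μ).re := by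
  have hM : 0 < M := by
    obtain ⟨l, h1, h2⟩ := h.exists
    calc 0 < m := hm
    _ ≤ (g l).re := h1
    _ ≤ ‖g l‖ := Complex.re_le_norm _
    _ ≤ M := h2
  refine re_integral_pos (C := m⁻¹) hgm (div_pos hm (pow_pos hM 2)) ?_
  filter_upwards [h] with l hl
  exact inv_re_bounds hm hl.1 hl.2

lemma exp_mul_arg (s : ℂ) (hs : s ≠ 0) (ψ : ℝ) :
    Complex.exp ((ψ : ℂ) * Complex.I) * s
      = (‖s‖ : ℂ) * Complex.exp (((ψ + s.arg : ℝ) : ℂ) * Complex.I) := by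
  conv_lhs => rw [← Complex.norm_mul_exp_arg_mul_I s]
  rw [mul_comm, mul_assoc, ← Complex.exp_add]
  push_cast
  ring_nf

lemma key_ne [IsProbabilityMeasure μ] {t : ℝ → ℝ} (htm : Measurable t) {T : ℝ}
    (hT : 0 ≤ T) (h : ∀ᵐ l ∂μ, t l ∈ Icc 0 T) {s₁ s₂ : ℂ}
    (h1 : 0 < s₁.re) (h2 : 0 < s₂.re) :
    ∫ l, ((s₁ + (t l : ℂ)) * (s₂ + (t l : ℂ)))⁻¹ ∂μ ≠ 0 := by
  have hs₁ : s₁ ≠ 0 := fun h => by rw [h] at h1; simp at h1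
  have hs₂ : s₂ ≠ 0 := fun h => by rw [h] at h2; simp at h2
  set θ₁ := s₁.arg with hθ₁
  set θ₂ := s₂.arg with hθ₂
  have ha₁ : |θ₁| < Real.pi / 2 := Complex.abs_arg_lt_pi_div_two_iff.2 (Or.inl h1)
  have ha₂ : |θ₂| < Real.pi / 2 := Complex.abs_arg_lt_pi_div_two_iff.2 (Or.inl h2)
  rw [abs_lt] at ha₁ ha₂
  set φ := (θ₁ + θ₂) / 2 with hφ
  set d : ℂ := Complex.exp (((-φ : ℝ) : ℂ) * Complex.I) with hd
  have hcosφ : 0 < Real.cos φ :=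
    Real.cos_pos_of_mem_Ioo ⟨by simp only [hφ]; linarith [ha₁.1, ha₂.1], by simp only [hφ]; linarith [ha₁.2, ha₂.2]⟩
  have hcos₁ : 0 < Real.cos (-φ + θ₁) :=
    Real.cos_pos_of_mem_Ioo ⟨by simp only [hφ]; linarith [ha₁.1, ha₂.2], by simp only [hφ]; linarith [ha₁.2, ha₂.1]⟩
  have hcos₂ : 0 < Real.cos (-φ + θ₂) :=
    Real.cos_pos_of_mem_Ioo ⟨by simp only [hφ]; linarith [ha₂.1, ha₁.2], by simp only [hφ]; linarith [ha₂.2, ha₁.1]⟩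
  have habs₁ : 0 < ‖s₁‖ := norm_pos_iff.mpr hs₁
  have habs₂ : 0 < ‖s₂‖ := norm_pos_iff.mpr hs₂
  have hre₁ : (d * s₁).re = ‖s₁‖ * Real.cos (-φ + θ₁) := by
    rw [hd, exp_mul_arg s₁ hs₁, Complex.re_ofReal_mul, Complex.exp_ofReal_mul_I_re, ← hθ₁]
  have hre₂ : (d * s₂).re = ‖s₂‖ * Real.cos (-φ + θ₂) := by
    rw [hd, exp_mul_arg s₂ hs₂, Complex.re_ofReal_mul, Complex.exp_ofReal_mul_I_re, ← hθ₂]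
  have hangle : -φ + θ₁ + θ₂ = φ := by rw [hφ]; ring
  have hre₀ : (d * (s₁ * s₂)).re = ‖s₁‖ * ‖s₂‖ * Real.cos φ := by
    have e : d * (s₁ * s₂)
        = (‖s₁‖ : ℂ) * ((‖s₂‖ : ℂ)
            * Complex.exp (((-φ + θ₁ + θ₂ : ℝ) : ℂ) * Complex.I)) := by
      rw [← mul_assoc, hd, exp_mul_arg s₁ hs₁, ← hθ₁, mul_assoc, exp_mul_arg s₂ hs₂, ← hθ₂]
    rw [e, hangle, Complex.re_ofReal_mul, Complex.re_ofReal_mul, Complex.exp_ofReal_mul_I_re]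
    ring
  have hdre : d.re = Real.cos φ := by
    rw [hd, Complex.exp_ofReal_mul_I_re, Real.cos_neg]
  set m₀ := ‖s₁‖ * ‖s₂‖ * Real.cos φ with hm₀def
  set M₀ := (‖s₁‖ + T) * (‖s₂‖ + T) with hM₀def
  have hm₀ : 0 < m₀ := by positivity
  have key : ∀ᵐ l ∂μ, m₀ ≤ (d * ((s₁ + (t l : ℂ)) * (s₂ + (t l : ℂ)))).re ∧
      ‖d * ((s₁ + (t l : ℂ)) * (s₂ + (t l : ℂ)))‖ ≤ M₀ := by
    filter_upwards [h] with l hl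
    obtain ⟨hl0, hlT⟩ := hl
    constructor
    · have expand : d * ((s₁ + (t l : ℂ)) * (s₂ + (t l : ℂ)))
          = d * (s₁ * s₂) + ((t l : ℝ) : ℂ) * (d * s₁) + ((t l : ℝ) : ℂ) * (d * s₂)
            + ((t l ^ 2 : ℝ) : ℂ) * d := by push_cast; ring
      rw [expand, Complex.add_re, Complex.add_re, Complex.add_re, Complex.re_ofReal_mul,
        Complex.re_ofReal_mul, Complex.re_ofReal_mul, hre₀, hre₁, hre₂, hdre]
      have p1 : 0 ≤ t l * (‖s₁‖ * Real.cos (-φ + θ₁)) :=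
        mul_nonneg hl0 (mul_nonneg habs₁.le hcos₁.le)
      have p2 : 0 ≤ t l * (‖s₂‖ * Real.cos (-φ + θ₂)) :=
        mul_nonneg hl0 (mul_nonneg habs₂.le hcos₂.le)
      have p3 : 0 ≤ t l ^ 2 * Real.cos φ := mul_nonneg (sq_nonneg _) hcosφ.le
      linarith
    · rw [norm_mul, norm_mul, Complex.norm_exp_ofReal_mul_I, one_mul, hM₀def]
      have b1 : ‖s₁ + (t l : ℂ)‖ ≤ ‖s₁‖ + T := by
        refine le_trans (norm_add_le _ _) ?_
        rw [Complex.norm_real, Real.norm_eq_abs, abs_of_nonneg hl0]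
        linarith
      have b2 : ‖s₂ + (t l : ℂ)‖ ≤ ‖s₂‖ + T := by
        refine le_trans (norm_add_le _ _) ?_
        rw [Complex.norm_real, Real.norm_eq_abs, abs_of_nonneg hl0]
        linarith
      exact mul_le_mul b1 b2 (norm_nonneg _) (by positivity)
  have hmeas : AEStronglyMeasurable
      (fun l => (d * ((s₁ + (t l : ℂ)) * (s₂ + (t l : ℂ))))⁻¹) μ := by
    apply Measurable.aestronglyMeasurable
    apply Measurable.inv
    exact measurable_const.mul
      (((measurable_const.add (Complex.measurable_ofReal.comp htm)).mul
        (measurable_const.add (Complex.measurable_ofReal.comp htm))))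
  have hpos := re_integral_inv_pos hmeas hm₀ key
  intro hcontra
  have heq : (fun l => (d * ((s₁ + (t l : ℂ)) * (s₂ + (t l : ℂ))))⁻¹)
      = fun l => d⁻¹ * ((s₁ + (t l : ℂ)) * (s₂ + (t l : ℂ)))⁻¹ := by
    funext l; rw [mul_inv]
  rw [heq, integral_const_mul, hcontra, mul_zero] at hpos
  simp at hpos

end Key

end MyAux17



/-- The complex Stieltjes transform. -/
noncomputable def Gc (μ : MeasureTheory.Measure ℝ) (z : ℂ) : ℂ := ∫ l, ((l : ℂ) - z)⁻¹ ∂μ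


section MyMain17
open MeasureTheory Filter Set

lemma Gc_re_pos {μ : MeasureTheory.Measure ℝ} [IsProbabilityMeasure μ]
    (hc : HasCompactSupp μ) {z : ℂ} (hz : z.re < aInf μ) : 0 < (Gc μ z).re := by
  have hae := ae_mem_Icc μ hc
  have hab := aInf_le_bSup μ hc
  have hm : 0 < aInf μ - z.re := by linarith
  refine re_integral_inv_pos (g := fun l : ℝ => (l : ℂ) - z) (M := |aInf μ| + |bSup μ| + ‖z‖)
    ((Complex.measurable_ofReal.sub measurable_const).inv.aestronglyMeasurable) hm ?_
  filter_upwards [hae] with l hl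
  constructor
  · simp only [Complex.sub_re, Complex.ofReal_re]
    linarith [hl.1]
  · have hl' : |l| ≤ |aInf μ| + |bSup μ| :=
      abs_le.2 ⟨by linarith [neg_abs_le (aInf μ), abs_nonneg (bSup μ), hl.1],
                by linarith [le_abs_self (bSup μ), abs_nonneg (aInf μ), hl.2]⟩
    calc ‖(l : ℂ) - z‖ ≤ ‖(l : ℂ)‖ + ‖z‖ := by
          exact norm_sub_le _ _
    _ ≤ |aInf μ| + |bSup μ| + ‖z‖ := by
          rw [Complex.norm_real, Real.norm_eq_abs]; linarith
  
lemma Gc_re_neg {μ : MeasureTheory.Measure ℝ} [IsProbabilityMeasure μ]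
    (hc : HasCompactSupp μ) {z : ℂ} (hz : bSup μ < z.re) : (Gc μ z).re < 0 := by
  have hae := ae_mem_Icc μ hc
  have hab := aInf_le_bSup μ hc
  have hGc : Gc μ z = - ∫ l, (z - (l : ℂ))⁻¹ ∂μ := by
    rw [← integral_neg]
    unfold Gc
    congr 1
    funext l
    rw [← inv_neg, neg_sub]
  rw [hGc, Complex.neg_re, neg_lt_zero]
  have hm : 0 < z.re - bSup μ := by linarith
  refine re_integral_inv_pos (g := fun l : ℝ => z - (l : ℂ)) (M := ‖z‖ + (|aInf μ| + |bSup μ|))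
    ((measurable_const.sub Complex.measurable_ofReal).inv.aestronglyMeasurable) hm ?_
  filter_upwards [hae] with l hl
  constructor
  · simp only [Complex.sub_re, Complex.ofReal_re]
    linarith [hl.2]
  · have hl' : |l| ≤ |aInf μ| + |bSup μ| :=
      abs_le.2 ⟨by linarith [neg_abs_le (aInf μ), abs_nonneg (bSup μ), hl.1],
                by linarith [le_abs_self (bSup μ), abs_nonneg (aInf μ), hl.2]⟩
    calc ‖z - (l : ℂ)‖ ≤ ‖z‖ + ‖(l : ℂ)‖ := by
          exact norm_sub_le _ _
    _ ≤ ‖z‖ + (|aInf μ| + |bSup μ|) := by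
          rw [Complex.norm_real, Real.norm_eq_abs]; linarith

end MyMain17

/-- the complex Stieltjes transform is holomorphic off the support and
injective on `{z : Re z ∉ [a_μ, b_μ]}`. -/
theorem statement17 (μ : MeasureTheory.Measure ℝ) [MeasureTheory.IsProbabilityMeasure μ]
    (hc : HasCompactSupp μ) :
    DifferentiableOn ℂ (Gc μ) (((fun x : ℝ => (x : ℂ)) '' msupp μ)ᶜ) ∧
    Set.InjOn (Gc μ) {z : ℂ | z.re < aInf μ ∨ bSup μ < z.re} := by
  obtain ⟨K, hK, hK1⟩ := hc
  have hcs : HasCompactSupp μ := ⟨K, hK, hK1⟩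
  have hae := ae_mem_Icc μ hcs
  have hab := aInf_le_bSup μ hcs
  have hmem : ∀ᵐ l ∂μ, l ∈ msupp μ := ae_mem_msupp μ
  constructor
  · -- differentiability
    intro z₀ hz₀
    have hopen : IsOpen (((fun x : ℝ => (x : ℂ)) '' msupp μ)ᶜ) := by
      rw [isOpen_compl_iff]
      exact (Complex.isometry_ofReal.isClosedEmbedding.isClosedMap _ (msupp_isClosed μ))
    obtain ⟨ε, hε, hball⟩ := Metric.isOpen_iff.1 hopen z₀ hz₀
    have hfar : ∀ᵐ (l : ℝ) ∂μ, ∀ z ∈ Metric.ball z₀ (ε / 2), ε / 2 ≤ ‖(l : ℂ) - z‖ := by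
      filter_upwards [hmem] with l hl z hz
      have hlz₀ : ε ≤ dist ((l : ℂ)) z₀ := by
        by_contra hcon
        push_neg at hcon
        exact (hball (Metric.mem_ball.2 hcon)) ⟨l, hl, rfl⟩
      have h1 : dist ((l : ℂ)) z₀ ≤ dist ((l : ℂ)) z + dist z z₀ := dist_triangle _ _ _
      have h2 : dist z z₀ < ε / 2 := Metric.mem_ball.1 hz
      rw [show ‖(l : ℂ) - z‖ = dist ((l : ℂ)) z from (Complex.dist_eq _ _).symm]
      linarith
    have hmeasz : ∀ z : ℂ, AEStronglyMeasurable (fun l : ℝ => ((l : ℂ) - z)⁻¹) μ :=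
      fun z => (Complex.measurable_ofReal.sub measurable_const).inv.aestronglyMeasurable
    have key := hasDerivAt_integral_of_dominated_loc_of_deriv_le
      (F := fun (z : ℂ) (l : ℝ) => ((l : ℂ) - z)⁻¹)
      (F' := fun (z : ℂ) (l : ℝ) => (((l : ℂ) - z) ^ 2)⁻¹)
      (x₀ := z₀) (bound := fun _ => ((ε / 2) ^ 2)⁻¹)
      (Metric.ball_mem_nhds z₀ (half_pos hε))
      (Eventually.of_forall fun z => hmeasz z)
      (by
        refine Integrable.mono' (integrable_const (ε / 2)⁻¹) (hmeasz z₀) ?_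
        filter_upwards [hfar] with l hl
        have h0 := hl z₀ (Metric.mem_ball_self (half_pos hε))
        rw [norm_inv]
        exact inv_anti₀ (half_pos hε) h0)
      (((Complex.measurable_ofReal.sub measurable_const).pow_const 2).inv.aestronglyMeasurable)
      (by
        filter_upwards [hfar] with l hl z hz
        have h0 := hl z hz
        rw [norm_inv, norm_pow]
        refine inv_anti₀ (by positivity) ?_
        exact pow_le_pow_left₀ (by positivity) h0 2)
      (integrable_const _)
      (by
        filter_upwards [hfar] with l hl z hz
        have h0 := hl z hz
        have hne : (l : ℂ) - z ≠ 0 := by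
          intro hcon
          rw [hcon] at h0
          simp at h0
          linarith
        have := ((hasDerivAt_id z).const_sub (l : ℂ)).inv hne
        simp at this; exact this)
    exact (key.2.differentiableAt).differentiableWithinAt
  · -- injectivity
    intro z₁ h₁ z₂ h₂ heq
    simp only [mem_setOf_eq] at h₁ h₂
    have hint : ∀ z : ℂ, (z.re < aInf μ ∨ bSup μ < z.re) →
        Integrable (fun l : ℝ => ((l : ℂ) - z)⁻¹) μ := by
      intro z hz
      rcases hz with hz | hz
      · refine integrable_resolvent (by linarith : (0:ℝ) < aInf μ - z.re) ?_
        filter_upwards [hae] with l hl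
        calc aInf μ - z.re ≤ l - z.re := by linarith [hl.1]
        _ ≤ |l - z.re| := le_abs_self _
        _ = |((l : ℂ) - z).re| := by simp [Complex.sub_re]
        _ ≤ ‖(l : ℂ) - z‖ := Complex.abs_re_le_norm _
      · refine integrable_resolvent (by linarith : (0:ℝ) < z.re - bSup μ) ?_
        filter_upwards [hae] with l hl
        calc z.re - bSup μ ≤ -(l - z.re) := by linarith [hl.2]
        _ ≤ |l - z.re| := neg_le_abs _
        _ = |((l : ℂ) - z).re| := by simp [Complex.sub_re]
        _ ≤ ‖(l : ℂ) - z‖ := Complex.abs_re_le_norm _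
    have hzero : ∫ l, (((l : ℂ) - z₁)⁻¹ - ((l : ℂ) - z₂)⁻¹) ∂μ = 0 := by
      rw [integral_sub (hint z₁ h₁) (hint z₂ h₂)]
      exact sub_eq_zero_of_eq heq
    by_contra hne
    have hd : z₁ - z₂ ≠ 0 := sub_ne_zero.2 hne
    rcases h₁ with h₁ | h₁ <;> rcases h₂ with h₂ | h₂
    · -- both left
      have hs₁ : (0:ℝ) < (((aInf μ : ℝ) : ℂ) - z₁).re := by
        simp only [Complex.sub_re, Complex.ofReal_re]; linarith
      have hs₂ : (0:ℝ) < (((aInf μ : ℝ) : ℂ) - z₂).re := by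
        simp only [Complex.sub_re, Complex.ofReal_re]; linarith
      have hkey := key_ne (μ := μ) (t := fun l => l - aInf μ)
        (measurable_id.sub measurable_const) (by linarith : (0:ℝ) ≤ bSup μ - aInf μ)
        (by filter_upwards [hae] with l hl; exact ⟨by linarith [hl.1], by linarith [hl.2]⟩)
        hs₁ hs₂
      apply hkey
      have hconv : ∫ l, ((((aInf μ : ℝ) : ℂ) - z₁ + ((l - aInf μ : ℝ) : ℂ)) *
          (((aInf μ : ℝ) : ℂ) - z₂ + ((l - aInf μ : ℝ) : ℂ)))⁻¹ ∂μ
          = ∫ l, (z₁ - z₂)⁻¹ * (((l : ℂ) - z₁)⁻¹ - ((l : ℂ) - z₂)⁻¹) ∂μ := by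
        apply integral_congr_ae
        filter_upwards [hae] with l hl
        have e₁ : ((aInf μ : ℝ) : ℂ) - z₁ + ((l - aInf μ : ℝ) : ℂ) = (l : ℂ) - z₁ := by
          push_cast; ring
        have e₂ : ((aInf μ : ℝ) : ℂ) - z₂ + ((l - aInf μ : ℝ) : ℂ) = (l : ℂ) - z₂ := by
          push_cast; ring
        rw [e₁, e₂]
        have hw₁ : (l : ℂ) - z₁ ≠ 0 := by
          intro hcon
          have : ((l : ℂ) - z₁).re = 0 := by rw [hcon]; rfl
          simp only [Complex.sub_re, Complex.ofReal_re] at this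
          linarith [hl.1]
        have hw₂ : (l : ℂ) - z₂ ≠ 0 := by
          intro hcon
          have : ((l : ℂ) - z₂).re = 0 := by rw [hcon]; rfl
          simp only [Complex.sub_re, Complex.ofReal_re] at this
          linarith [hl.1]
        field_simp
        ring
      rw [hconv, integral_const_mul, hzero, mul_zero]
    · -- mixed: z₁ left, z₂ right
      have hp := Gc_re_pos hcs h₁
      have hn := Gc_re_neg hcs h₂
      rw [heq] at hp
      linarith
    · -- mixed: z₁ right, z₂ left
      have hp := Gc_re_pos hcs h₂
      have hn := Gc_re_neg hcs h₁
      rw [heq] at hn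
      linarith
    · -- both right
      have hs₁ : (0:ℝ) < (z₁ - ((bSup μ : ℝ) : ℂ)).re := by
        simp only [Complex.sub_re, Complex.ofReal_re]; linarith
      have hs₂ : (0:ℝ) < (z₂ - ((bSup μ : ℝ) : ℂ)).re := by
        simp only [Complex.sub_re, Complex.ofReal_re]; linarith
      have hkey := key_ne (μ := μ) (t := fun l => bSup μ - l)
        (measurable_const.sub measurable_id) (by linarith : (0:ℝ) ≤ bSup μ - aInf μ)
        (by filter_upwards [hae] with l hl; exact ⟨by linarith [hl.2], by linarith [hl.1]⟩)
        hs₁ hs₂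
      apply hkey
      have hconv : ∫ l, ((z₁ - ((bSup μ : ℝ) : ℂ) + ((bSup μ - l : ℝ) : ℂ)) *
          (z₂ - ((bSup μ : ℝ) : ℂ) + ((bSup μ - l : ℝ) : ℂ)))⁻¹ ∂μ
          = ∫ l, (z₁ - z₂)⁻¹ * (((l : ℂ) - z₁)⁻¹ - ((l : ℂ) - z₂)⁻¹) ∂μ := by
        apply integral_congr_ae
        filter_upwards [hae] with l hl
        have e₁ : z₁ - ((bSup μ : ℝ) : ℂ) + ((bSup μ - l : ℝ) : ℂ) = z₁ - (l : ℂ) := by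
          push_cast; ring
        have e₂ : z₂ - ((bSup μ : ℝ) : ℂ) + ((bSup μ - l : ℝ) : ℂ) = z₂ - (l : ℂ) := by
          push_cast; ring
        rw [e₁, e₂]
        have hw₁ : z₁ - (l : ℂ) ≠ 0 := by
          intro hcon
          have : (z₁ - (l : ℂ)).re = 0 := by rw [hcon]; rfl
          simp only [Complex.sub_re, Complex.ofReal_re] at this
          linarith [hl.2]
        have hw₂ : z₂ - (l : ℂ) ≠ 0 := by
          intro hcon
          have : (z₂ - (l : ℂ)).re = 0 := by rw [hcon]; rfl
          simp only [Complex.sub_re, Complex.ofReal_re] at this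
          linarith [hl.2]
        have hw₁' : (l : ℂ) - z₁ ≠ 0 := sub_ne_zero.2 (Ne.symm (sub_ne_zero.1 hw₁))
        have hw₂' : (l : ℂ) - z₂ ≠ 0 := sub_ne_zero.2 (Ne.symm (sub_ne_zero.1 hw₂))
        field_simp
        ring
      rw [hconv, integral_const_mul, hzero, mul_zero]
end
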